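/- arXiv:1510.07982 — 3 statements merged into one kernel-verified Lean document; each statement's English description precedes it below -/
import Mathlib

section
/- For any real number α and any integers r, t ≥ 2, the general Randić index of the Sierpiński graph S(K_{1,r},t) built from the star K_{1,r} satisfies R_α(S(K_{1,r},t)) = (r+1)^α·((r+1)^{t−1}(r−1) + 1) + 2^α·r^{α+1} + (2(r+1))^α·(2(r+1)^{t−1} − r − 2). -/
open Finset

/-- The generalized Sierpiński graph `S(G,t)` on words of length `t` over the vertex set. -/
def sierpinskiGraph {V : Type*} (G : SimpleGraph V) (t : ℕ) :
    SimpleGraph (Fin t → V) where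
  Adj u v := ∃ i : Fin t, (∀ j, j < i → u j = v j) ∧ u i ≠ v i ∧ G.Adj (u i) (v i) ∧
      ∀ j, i < j → u j = v i ∧ v j = u i
  symm := by
    constructor
    rintro u v ⟨i, h1, h2, h3, h4⟩
    exact ⟨i, fun j hj => (h1 j hj).symm, fun h => h2 h.symm, h3.symm,
      fun j hj => ⟨(h4 j hj).2, (h4 j hj).1⟩⟩
  loopless := by
    constructor
    rintro u ⟨i, _, h2, _⟩
    exact h2 rfl

instance {V : Type*} [Fintype V] [DecidableEq V] (G : SimpleGraph V) [DecidableRel G.Adj]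
    (t : ℕ) : DecidableRel (sierpinskiGraph G t).Adj := fun u v =>
  inferInstanceAs (Decidable (∃ i : Fin t, (∀ j, j < i → u j = v j) ∧ u i ≠ v i ∧
    G.Adj (u i) (v i) ∧ ∀ j, i < j → u j = v i ∧ v j = u i))

/-- The general Randić index `R_α`. -/
noncomputable def randic {V : Type*} [Fintype V] (G : SimpleGraph V) (α : ℝ) : ℝ := by
  classical
  exact ∑ e ∈ G.edgeFinset,
    Sym2.lift ⟨fun u v => ((G.degree u : ℝ) * (G.degree v : ℝ)) ^ α,
      fun u v => by dsimp only; rw [mul_comm]⟩ e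

/-- `τ(x,y)`: the number of triangles containing the adjacent vertices `x` and `y`. -/
def tau {V : Type*} [Fintype V] [DecidableEq V] (G : SimpleGraph V) [DecidableRel G.Adj]
    (x y : V) : ℕ := (G.neighborFinset x ∩ G.neighborFinset y).card

lemma tau_comm {V : Type*} [Fintype V] [DecidableEq V] (G : SimpleGraph V) [DecidableRel G.Adj]
    (x y : V) : tau G x y = tau G y x := by
  simp [tau, Finset.inter_comm]

/-- `ψ(t) = 1 + n + ⋯ + n^{t-1}`. -/
def psi (n t : ℕ) : ℕ := ∑ i ∈ Finset.range t, n ^ i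

/-- `τ(G)`: the number of triangles of `G`. -/
noncomputable def triangleCount {V : Type*} [Fintype V] (G : SimpleGraph V) : ℕ := by
  classical exact (G.cliqueFinset 3).card

instance {A B : Type*} : DecidableRel (completeBipartiteGraph A B).Adj := fun a b =>
  inferInstanceAs (Decidable (a.isLeft ∧ b.isRight ∨ a.isRight ∧ b.isLeft))

namespace RStar

variable {r t : ℕ}

abbrev V (r : ℕ) := Fin 1 ⊕ Fin r
abbrev W (r t : ℕ) := Fin t → V r

def ct {r : ℕ} : V r := Sum.inl 0

abbrev G (r : ℕ) : SimpleGraph (V r) := completeBipartiteGraph (Fin 1) (Fin r)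

abbrev S (r t : ℕ) : SimpleGraph (W r t) := sierpinskiGraph (G r) t

def LL (t : ℕ) [NeZero t] : Fin t :=
  ⟨t - 1, Nat.sub_lt (Nat.pos_of_ne_zero (NeZero.ne t)) one_pos⟩

lemma le_LL [NeZero t] (j : Fin t) : j ≤ LL t := by
  have := j.isLt; simp [LL, Fin.le_def]; omega

lemma lt_LL_iff [NeZero t] {j : Fin t} : j < LL t ↔ j ≠ LL t := by
  have := j.isLt
  simp [LL, Fin.lt_def, Fin.ext_iff]; omega

lemma V_cases (a : V r) : a = ct ∨ ∃ y, a = Sum.inr y := by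
  rcases a with a | y
  · left; simp [ct, Subsingleton.elim a 0]
  · right; exact ⟨y, rfl⟩

lemma ct_ne_inr (y : Fin r) : (ct : V r) ≠ Sum.inr y := by simp [ct]

lemma inl_eq_ct (a : Fin 1) : (Sum.inl a : V r) = ct := by
  simp [ct, Subsingleton.elim a 0]

lemma adj_star {a b : V r} : (G r).Adj a b ↔
    (a = ct ∧ ∃ y, b = Sum.inr y) ∨ ((∃ y, a = Sum.inr y) ∧ b = ct) := by
  rcases a with a | a <;> rcases b with b | b
  · simp [G, ct]
  · simp [G, ct, Subsingleton.elim a 0]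
  · simp [G, ct, Subsingleton.elim b 0]
  · simp [G, ct]

/-- center-endpoint of an edge at level `i` with prefix `p` and leaf `x`. -/
def U (i : Fin t) (p : W r t) (x : Fin r) : W r t :=
  fun j => if j < i then p j else if j = i then ct else Sum.inr x

/-- leaf-endpoint of an edge at level `i`. -/
def Vv (i : Fin t) (p : W r t) (x : Fin r) : W r t :=
  fun j => if j < i then p j else if j = i then Sum.inr x else ct

lemma U_lt {i : Fin t} {p : W r t} {x : Fin r} {j : Fin t} (h : j < i) : U i p x j = p j := by simp [U, h]
lemma U_eq {i : Fin t} {p : W r t} {x} : U i p x i = ct := by simp [U]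
lemma U_gt {i : Fin t} {p : W r t} {x : Fin r} {j : Fin t} (h : i < j) : U i p x j = Sum.inr x := by
  simp [U, h.ne', not_lt_of_gt h]
lemma Vv_lt {i : Fin t} {p : W r t} {x : Fin r} {j : Fin t} (h : j < i) : Vv i p x j = p j := by simp [Vv, h]
lemma Vv_eq {i : Fin t} {p : W r t} {x} : Vv i p x i = Sum.inr x := by simp [Vv]
lemma Vv_gt {i : Fin t} {p : W r t} {x : Fin r} {j : Fin t} (h : i < j) : Vv i p x j = ct := by
  simp [Vv, h.ne', not_lt_of_gt h]


lemma adjA [NeZero t] {w z : W r t} (hw : w (LL t) = ct) :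
    (S r t).Adj w z ↔ ((∃ y, z = Function.update w (LL t) (Sum.inr y)) ∨
      (∃ m y, m ≠ LL t ∧ w m = Sum.inr y ∧ (∀ j, m < j → w j = ct) ∧ z = U m w y)) := by
  constructor
  · rintro ⟨i, h1, h2, h3, h4⟩
    rcases adj_star.mp h3 with ⟨hwi, y, hzi⟩ | ⟨⟨y, hwi⟩, hzi⟩
    · by_cases hi : i = LL t
      · subst hi
        left; refine ⟨y, funext fun j => ?_⟩
        by_cases hj : j = LL t
        · subst hj; rw [Function.update_self, ← hzi]
        · rw [Function.update_of_ne hj, ← h1 j (lt_LL_iff.mpr hj)]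
      · exfalso
        have := (h4 (LL t) (lt_LL_iff.mpr hi)).1
        rw [hw, hzi] at this
        exact ct_ne_inr y this
    · by_cases hi : i = LL t
      · exfalso; rw [hi, hw] at hwi; exact ct_ne_inr y hwi
      · right
        refine ⟨i, y, hi, hwi, fun j hj => by rw [(h4 j hj).1, hzi], funext fun j => ?_⟩
        rcases lt_trichotomy j i with h | h | h
        · rw [U_lt h, h1 j h]
        · subst h; rw [U_eq, hzi]
        · rw [U_gt h, (h4 j h).2, hwi]
  · rintro (⟨y, rfl⟩ | ⟨m, y, hm, hwm, hc, rfl⟩)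
    · refine ⟨LL t, fun j hj => ?_, ?_, ?_, fun j hj => absurd hj (not_lt.mpr (le_LL j))⟩
      · rw [Function.update_of_ne (ne_of_lt hj)]
      · rw [Function.update_self, hw]; exact ct_ne_inr y
      · rw [Function.update_self, hw]; exact adj_star.mpr (Or.inl ⟨rfl, y, rfl⟩)
    · refine ⟨m, fun j hj => (U_lt hj).symm, ?_, ?_, fun j hj => ?_⟩
      · rw [U_eq, hwm]; exact fun h => ct_ne_inr y h.symm
      · rw [U_eq, hwm]; exact adj_star.mpr (Or.inr ⟨⟨y, rfl⟩, rfl⟩)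
      · exact ⟨by rw [U_eq, hc j hj], by rw [U_gt hj, hwm]⟩

lemma adjB [NeZero t] {w z : W r t} {x : Fin r} (hw : w (LL t) = Sum.inr x) :
    (S r t).Adj w z ↔ ((z = Function.update w (LL t) ct) ∨
      (∃ m, m ≠ LL t ∧ w m = ct ∧ (∀ j, m < j → w j = Sum.inr x) ∧ z = Vv m w x)) := by
  constructor
  · rintro ⟨i, h1, h2, h3, h4⟩
    rcases adj_star.mp h3 with ⟨hwi, y, hzi⟩ | ⟨⟨y, hwi⟩, hzi⟩
    · by_cases hi : i = LL t
      · exfalso; rw [hi, hw] at hwi; exact ct_ne_inr x hwi.symm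
      · right
        have hyx : y = x := by
          have := (h4 (LL t) (lt_LL_iff.mpr hi)).1
          rw [hw, hzi] at this
          exact (Sum.inr.inj this).symm
        subst hyx
        refine ⟨i, hi, hwi, fun j hj => by rw [(h4 j hj).1, hzi], funext fun j => ?_⟩
        rcases lt_trichotomy j i with h | h | h
        · rw [Vv_lt h, h1 j h]
        · subst h; rw [Vv_eq, hzi]
        · rw [Vv_gt h, (h4 j h).2, hwi]
    · by_cases hi : i = LL t
      · subst hi
        left
        refine funext fun j => ?_
        by_cases hj : j = LL t
        · subst hj; rw [Function.update_self, hzi]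
        · rw [Function.update_of_ne hj, ← h1 j (lt_LL_iff.mpr hj)]
      · exfalso
        have := (h4 (LL t) (lt_LL_iff.mpr hi)).1
        rw [hw, hzi] at this
        exact ct_ne_inr x this.symm
  · rintro (rfl | ⟨m, hm, hwm, hc, rfl⟩)
    · refine ⟨LL t, fun j hj => ?_, ?_, ?_, fun j hj => absurd hj (not_lt.mpr (le_LL j))⟩
      · rw [Function.update_of_ne (ne_of_lt hj)]
      · rw [Function.update_self, hw]; exact fun h => ct_ne_inr x h.symm
      · rw [Function.update_self, hw]; exact adj_star.mpr (Or.inr ⟨⟨x, rfl⟩, rfl⟩)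
    · refine ⟨m, fun j hj => (Vv_lt hj).symm, ?_, ?_, fun j hj => ?_⟩
      · rw [Vv_eq, hwm]; exact ct_ne_inr x
      · rw [Vv_eq, hwm]; exact adj_star.mpr (Or.inl ⟨rfl, x, rfl⟩)
      · exact ⟨by rw [Vv_eq, hc j hj], by rw [Vv_gt hj, hwm]⟩


lemma upd_inj [NeZero t] (w : W r t) :
    Function.Injective (fun y : Fin r => Function.update w (LL t) (Sum.inr y)) := by
  intro a b h
  have := congrFun h (LL t)
  simpa using this

lemma degA1 [NeZero t] {w : W r t} (hw : ∀ j, w j = ct) : (S r t).degree w = r := by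
  have h : (S r t).neighborFinset w =
      Finset.univ.image (fun y : Fin r => Function.update w (LL t) (Sum.inr y)) := by
    ext z
    rw [SimpleGraph.mem_neighborFinset, adjA (hw _)]
    simp only [Finset.mem_image, Finset.mem_univ, true_and]
    constructor
    · rintro (⟨y, rfl⟩ | ⟨m, y, hm, hwm, _, _⟩)
      · exact ⟨y, rfl⟩
      · exact absurd ((hw m).symm.trans hwm) (ct_ne_inr y)
    · rintro ⟨y, rfl⟩; exact Or.inl ⟨y, rfl⟩
  rw [← SimpleGraph.card_neighborFinset_eq_degree, h,
    Finset.card_image_of_injective _ (upd_inj w), Finset.card_univ, Fintype.card_fin]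

lemma degA2 [NeZero t] {w : W r t} {m : Fin t} {y : Fin r} (hw : w (LL t) = ct)
    (hm : m ≠ LL t) (hwm : w m = Sum.inr y) (hmax : ∀ j, m < j → w j = ct) :
    (S r t).degree w = r + 1 := by
  have h : (S r t).neighborFinset w =
      insert (U m w y)
        (Finset.univ.image (fun y : Fin r => Function.update w (LL t) (Sum.inr y))) := by
    ext z
    rw [SimpleGraph.mem_neighborFinset, adjA hw]
    simp only [Finset.mem_insert, Finset.mem_image, Finset.mem_univ, true_and]
    constructor
    · rintro (⟨y', rfl⟩ | ⟨m', y', hm', hwm', hmax', rfl⟩)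
      · exact Or.inr ⟨y', rfl⟩
      · left
        have hmm : m' = m := by
          rcases lt_trichotomy m m' with h | h | h
          · exact absurd ((hmax m' h).symm.trans hwm') (ct_ne_inr y')
          · exact h.symm
          · exact absurd ((hmax' m h).symm.trans hwm) (ct_ne_inr y)
        subst hmm
        have : y' = y := Sum.inr.inj ((hwm'.symm.trans hwm))
        rw [this]
    · rintro (rfl | ⟨y', rfl⟩)
      · exact Or.inr ⟨m, y, hm, hwm, hmax, rfl⟩
      · exact Or.inl ⟨y', rfl⟩
  have hnot : U m w y ∉
      Finset.univ.image (fun y : Fin r => Function.update w (LL t) (Sum.inr y)) := by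
    simp only [Finset.mem_image, Finset.mem_univ, true_and, not_exists]
    intro y' he
    have := congrFun he m
    simp only [U_eq, Function.update_of_ne hm] at this
    exact ct_ne_inr y (this.symm.trans hwm)
  rw [← SimpleGraph.card_neighborFinset_eq_degree, h, Finset.card_insert_of_notMem hnot,
    Finset.card_image_of_injective _ (upd_inj w), Finset.card_univ, Fintype.card_fin]

lemma degB1 [NeZero t] {w : W r t} {x : Fin r} (hw : w (LL t) = Sum.inr x)
    (hno : ¬ ∃ m, m ≠ LL t ∧ w m = ct ∧ ∀ j, m < j → w j = Sum.inr x) :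
    (S r t).degree w = 1 := by
  have h : (S r t).neighborFinset w = {Function.update w (LL t) ct} := by
    ext z
    rw [SimpleGraph.mem_neighborFinset, adjB hw]
    simp only [Finset.mem_singleton]
    constructor
    · rintro (rfl | ⟨m, hm, hwm, hmax, rfl⟩)
      · rfl
      · exact absurd ⟨m, hm, hwm, hmax⟩ hno
    · rintro rfl; exact Or.inl rfl
  rw [← SimpleGraph.card_neighborFinset_eq_degree, h, Finset.card_singleton]

lemma degB2 [NeZero t] {w : W r t} {x : Fin r} {m : Fin t} (hw : w (LL t) = Sum.inr x)
    (hm : m ≠ LL t) (hwm : w m = ct) (hmax : ∀ j, m < j → w j = Sum.inr x) :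
    (S r t).degree w = 2 := by
  have h : (S r t).neighborFinset w = {Function.update w (LL t) ct, Vv m w x} := by
    ext z
    rw [SimpleGraph.mem_neighborFinset, adjB hw]
    simp only [Finset.mem_insert, Finset.mem_singleton]
    constructor
    · rintro (rfl | ⟨m', hm', hwm', hmax', rfl⟩)
      · exact Or.inl rfl
      · right
        have hmm : m' = m := by
          rcases lt_trichotomy m m' with h | h | h
          · exact absurd ((hmax m' h).symm.trans hwm') (fun hh => ct_ne_inr x hh.symm)
          · exact h.symm
          · exact absurd ((hmax' m h).symm.trans hwm) (fun hh => ct_ne_inr x hh.symm)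
        subst hmm; rfl
    · rintro (rfl | rfl)
      · exact Or.inl rfl
      · exact Or.inr ⟨m, hm, hwm, hmax, rfl⟩
  have hne : Function.update w (LL t) ct ≠ Vv m w x := by
    intro he
    have := congrFun he m
    rw [Function.update_of_ne hm, Vv_eq, hwm] at this
    exact ct_ne_inr x this
  rw [← SimpleGraph.card_neighborFinset_eq_degree, h]
  rw [Finset.card_insert_of_notMem (by simpa using hne), Finset.card_singleton]


lemma deg_U_ne [NeZero t] {i : Fin t} {p : W r t} {x : Fin r} (hi : i ≠ LL t) :
    (S r t).degree (U i p x) = 2 := by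
  have hiL : i < LL t := lt_LL_iff.mpr hi
  exact degB2 (U_gt hiL) hi U_eq (fun j hj => U_gt hj)

lemma deg_V_ne [NeZero t] {i : Fin t} {p : W r t} {x : Fin r} (hi : i ≠ LL t) :
    (S r t).degree (Vv i p x) = r + 1 := by
  have hiL : i < LL t := lt_LL_iff.mpr hi
  exact degA2 (Vv_gt hiL) hi Vv_eq (fun j hj => Vv_gt hj)

lemma deg_U_last_cc [NeZero t] {p : W r t} {x : Fin r} (hcc : ∀ j, j ≠ LL t → p j = ct) :
    (S r t).degree (U (LL t) p x) = r := by
  refine degA1 fun j => ?_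
  by_cases hj : j = LL t
  · subst hj; exact U_eq
  · rw [U_lt (lt_LL_iff.mpr hj)]; exact hcc j hj

lemma deg_U_last_ne [NeZero t] {p : W r t} {x : Fin r} {m : Fin t} {y : Fin r}
    (hm : m ≠ LL t) (hpm : p m = Sum.inr y)
    (hmax : ∀ j, m < j → j ≠ LL t → p j = ct) :
    (S r t).degree (U (LL t) p x) = r + 1 := by
  refine degA2 (y := y) U_eq hm ?_ fun j hj => ?_
  · rw [U_lt (lt_LL_iff.mpr hm)]; exact hpm
  · by_cases hjL : j = LL t
    · subst hjL; exact U_eq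
    · rw [U_lt (lt_LL_iff.mpr hjL)]; exact hmax j hj hjL

/-- the condition for the leaf-endpoint of a top-level edge to have degree 2 -/
def Cnd [NeZero t] (p : W r t) (x : Fin r) : Prop :=
  ∃ m, m ≠ LL t ∧ p m = ct ∧ ∀ j, m < j → j ≠ LL t → p j = Sum.inr x

instance [NeZero t] (p : W r t) (x : Fin r) : Decidable (Cnd p x) := by
  unfold Cnd; infer_instance

lemma deg_V_last_C [NeZero t] {p : W r t} {x : Fin r} (hC : Cnd p x) :
    (S r t).degree (Vv (LL t) p x) = 2 := by
  obtain ⟨m, hm, hpm, hmax⟩ := hC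
  refine degB2 Vv_eq hm ?_ fun j hj => ?_
  · rw [Vv_lt (lt_LL_iff.mpr hm)]; exact hpm
  · by_cases hjL : j = LL t
    · subst hjL; exact Vv_eq
    · rw [Vv_lt (lt_LL_iff.mpr hjL)]; exact hmax j hj hjL

lemma deg_V_last_nC [NeZero t] {p : W r t} {x : Fin r} (hC : ¬ Cnd p x) :
    (S r t).degree (Vv (LL t) p x) = 1 := by
  refine degB1 Vv_eq ?_
  rintro ⟨m, hm, h1, h2⟩
  refine hC ⟨m, hm, ?_, fun j hj hjL => ?_⟩
  · rw [Vv_lt (lt_LL_iff.mpr hm)] at h1; exact h1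
  · have := h2 j hj
    rw [Vv_lt (lt_LL_iff.mpr hjL)] at this
    exact this


def Idx (r t : ℕ) : Finset (Fin t × (W r t) × Fin r) :=
  Finset.univ.filter fun q => ∀ j, q.1 ≤ j → q.2.1 j = ct

def Emap (q : Fin t × (W r t) × Fin r) : Sym2 (W r t) :=
  s(U q.1 q.2.1 q.2.2, Vv q.1 q.2.1 q.2.2)

lemma adj_UV (i : Fin t) (p : W r t) (x : Fin r) : (S r t).Adj (U i p x) (Vv i p x) :=
  ⟨i, fun j hj => by rw [U_lt hj, Vv_lt hj],
    by rw [U_eq, Vv_eq]; exact ct_ne_inr x,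
    by rw [U_eq, Vv_eq]; exact adj_star.mpr (Or.inl ⟨rfl, x, rfl⟩),
    fun j hj => ⟨by rw [U_gt hj, Vv_eq], by rw [Vv_gt hj, U_eq]⟩⟩

lemma edge_decomp : (S r t).edgeFinset = (Idx r t).image Emap := by
  apply Finset.Subset.antisymm
  · intro e
    induction e using Sym2.ind with
    | _ u v =>
      intro he
      have hadj : (S r t).Adj u v :=
        (SimpleGraph.mem_edgeSet (S r t)).mp (SimpleGraph.mem_edgeFinset.mp he)
      obtain ⟨i, h1, h2, h3, h4⟩ := hadj
      rcases adj_star.mp h3 with ⟨hui, x, hvi⟩ | ⟨⟨x, hui⟩, hvi⟩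
      · refine Finset.mem_image.mpr ⟨(i, fun j => if j < i then u j else ct, x), ?_, ?_⟩
        · simp only [Idx, Finset.mem_filter, Finset.mem_univ, true_and]
          intro j hj
          simp [not_lt.mpr hj]
        · have hU' : U i (fun j => if j < i then u j else ct) x = u := by
            funext j
            rcases lt_trichotomy j i with h | h | h
            · rw [U_lt h]; simp [h]
            · subst h; rw [U_eq, hui]
            · rw [U_gt h, (h4 j h).1, hvi]
          have hV' : Vv i (fun j => if j < i then u j else ct) x = v := by
            funext j
            rcases lt_trichotomy j i with h | h | h
            · rw [Vv_lt h]; simp [h, h1 j h]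
            · subst h; rw [Vv_eq, hvi]
            · rw [Vv_gt h, (h4 j h).2, hui]
          show s(U i _ x, Vv i _ x) = s(u, v)
          rw [hU', hV']
      · refine Finset.mem_image.mpr ⟨(i, fun j => if j < i then u j else ct, x), ?_, ?_⟩
        · simp only [Idx, Finset.mem_filter, Finset.mem_univ, true_and]
          intro j hj
          simp [not_lt.mpr hj]
        · have hU' : U i (fun j => if j < i then u j else ct) x = v := by
            funext j
            rcases lt_trichotomy j i with h | h | h
            · rw [U_lt h]; simp [h, h1 j h]
            · subst h; rw [U_eq, hvi]
            · rw [U_gt h, (h4 j h).2, hui]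
          have hV' : Vv i (fun j => if j < i then u j else ct) x = u := by
            funext j
            rcases lt_trichotomy j i with h | h | h
            · rw [Vv_lt h]; simp [h]
            · subst h; rw [Vv_eq, hui]
            · rw [Vv_gt h, (h4 j h).1, hvi]
          show s(U i _ x, Vv i _ x) = s(u, v)
          rw [hU', hV', Sym2.eq_swap]
  · intro e he
    obtain ⟨q, _, rfl⟩ := Finset.mem_image.mp he
    exact SimpleGraph.mem_edgeFinset.mpr (adj_UV q.1 q.2.1 q.2.2)

lemma Emap_injOn : Set.InjOn (Emap (r := r) (t := t)) (Idx r t) := by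
  rintro ⟨i, p, x⟩ h1 ⟨i', p', x'⟩ h2 he
  have hp : ∀ j, i ≤ j → p j = ct :=
    (Finset.mem_filter.mp (Finset.mem_coe.mp h1)).2
  have hp' : ∀ j, i' ≤ j → p' j = ct :=
    (Finset.mem_filter.mp (Finset.mem_coe.mp h2)).2
  simp only [Emap, Sym2.eq_iff] at he
  rcases he with ⟨hU, hV⟩ | ⟨hUV, hVU⟩
  · have hii : i = i' := by
      by_contra hne
      rcases lt_or_gt_of_ne hne with h | h
      · have := congrFun hU i'
        rw [U_gt h, U_eq] at this
        exact ct_ne_inr x this.symm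
      · have := congrFun hU i
        rw [U_eq, U_gt h] at this
        exact ct_ne_inr x' this
    subst hii
    have hxx : x = x' := by
      have := congrFun hV i
      rw [Vv_eq, Vv_eq] at this
      exact Sum.inr.inj this
    subst hxx
    have hpp : p = p' := by
      funext j
      by_cases hj : j < i
      · have := congrFun hU j
        rwa [U_lt hj, U_lt hj] at this
      · rw [hp j (not_lt.mp hj), hp' j (not_lt.mp hj)]
    rw [hpp]
  · exfalso
    rcases lt_trichotomy i i' with h | h | h
    · have ha := congrFun hUV i
      have hb := congrFun hVU i
      rw [U_eq, Vv_lt h] at ha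
      rw [Vv_eq, U_lt h] at hb
      exact ct_ne_inr x (ha.trans hb.symm)
    · subst h
      have ha := congrFun hUV i
      rw [U_eq, Vv_eq] at ha
      exact ct_ne_inr x' ha
    · have ha := congrFun hUV i'
      have hb := congrFun hVU i'
      rw [U_lt h, Vv_eq] at ha
      rw [Vv_lt h, U_eq] at hb
      exact ct_ne_inr x' (hb.symm.trans ha)


/-- words with prescribed values from position `i` on -/
def Tail (i : Fin t) (g : W r t) : Finset (W r t) :=
  Finset.univ.filter fun p => ∀ j, i ≤ j → p j = g j

lemma card_Tail (i : Fin t) (g : W r t) : (Tail i g).card = (1 + r) ^ (i : ℕ) := by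
  have : (Finset.univ : Finset (Fin (i : ℕ) → V r)).card = (1 + r) ^ (i : ℕ) := by
    rw [Finset.card_univ, Fintype.card_fun]
    simp
  rw [← this]
  refine Finset.card_bij' (fun p _ => fun k => p ⟨(k : ℕ), k.isLt.trans i.isLt⟩)
    (fun f _ => fun j => if h : (j : ℕ) < (i : ℕ) then f ⟨(j : ℕ), h⟩ else g j)
    (fun p hp => Finset.mem_univ _) (fun f _ => ?_) (fun p hp => ?_) (fun f _ => ?_)
  · simp only [Tail, Finset.mem_filter, Finset.mem_univ, true_and]
    intro j hj
    rw [dif_neg (not_lt.mpr (Fin.le_def.mp hj))]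
  · funext j
    dsimp only
    by_cases h : (j : ℕ) < (i : ℕ)
    · rw [dif_pos h]
    · rw [dif_neg h]
      have hp' := (Finset.mem_filter.mp hp).2
      exact (hp' j (not_lt.mp h)).symm
  · funext k
    dsimp only
    rw [dif_pos k.isLt]

def cc (r t : ℕ) : W r t := fun _ => ct

lemma mem_Tail_LL [NeZero t] {p : W r t} : p ∈ Tail (LL t) (cc r t) ↔ p (LL t) = ct := by
  simp only [Tail, Finset.mem_filter, Finset.mem_univ, true_and, cc]
  constructor
  · intro h; exact (Finset.mem_filter.mp h).2 (LL t) le_rfl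
  · intro h; refine Finset.mem_filter.mpr ⟨Finset.mem_univ _, fun j hj => ?_⟩
    have : j = LL t := le_antisymm (le_LL j) hj
    rwa [this]

lemma cc_mem_Tail [NeZero t] : cc r t ∈ Tail (LL t) (cc r t) := mem_Tail_LL.mpr rfl

/-- the target tail pattern for `Cnd`: `ct` at `m` and `LL`, `x` in between -/
def gg [NeZero t] (m : Fin t) (x : Fin r) : W r t :=
  fun j => if j = m then ct else if j = LL t then ct else Sum.inr x

lemma Cnd_decomp [NeZero t] (x : Fin r) :
    (Tail (LL t) (cc r t)).filter (fun p => Cnd p x) =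
      (Finset.univ.erase (LL t)).biUnion (fun m => Tail m (gg m x)) := by
  ext p
  simp only [Finset.mem_filter, Finset.mem_biUnion, Finset.mem_erase, Finset.mem_univ,
    and_true, mem_Tail_LL]
  constructor
  · rintro ⟨hL, m, hm, hpm, hmax⟩
    refine ⟨m, hm, ?_⟩
    simp only [Tail, Finset.mem_filter, Finset.mem_univ, true_and]
    intro j hj
    rcases eq_or_lt_of_le hj with h | h
    · rw [← h, gg, if_pos rfl]; exact hpm
    · by_cases hjL : j = LL t
      · rw [gg, if_neg (by rw [hjL]; exact fun hh => hm hh.symm), if_pos hjL, hjL]; exact hL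
      · rw [gg, if_neg (ne_of_gt h), if_neg hjL]; exact hmax j h hjL
  · rintro ⟨m, hm, h⟩
    have h' := (Finset.mem_filter.mp h).2
    have hL : p (LL t) = ct := by
      have := h' (LL t) (le_LL m)
      rw [gg] at this
      rw [this, if_neg (fun hh => hm hh.symm), if_pos rfl]
    refine ⟨hL, m, hm, ?_, fun j hj hjL => ?_⟩
    · have := h' m le_rfl
      rw [gg, if_pos rfl] at this; exact this
    · have := h' j (le_of_lt hj)
      rw [gg, if_neg (ne_of_gt hj), if_neg hjL] at this; exact this


lemma Cnd_cc [NeZero t] (ht : 2 ≤ t) (x : Fin r) : Cnd (cc r t) x := by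
  refine ⟨⟨t - 2, by omega⟩, ?_, rfl, fun j hj hjL => ?_⟩
  · simp only [ne_eq, Fin.ext_iff, LL]
    omega
  · exfalso
    have h1 : t - 2 < (j : ℕ) := hj
    have h2 : (j : ℕ) ≠ t - 1 := fun hh => hjL (Fin.ext hh)
    have := j.isLt
    omega

lemma exists_max [NeZero t] {p : W r t} (hL : p (LL t) = ct) (hne : p ≠ cc r t) :
    ∃ m y, m ≠ LL t ∧ p m = Sum.inr y ∧ ∀ j, m < j → j ≠ LL t → p j = ct := by
  have hex : ∃ j, p j ≠ ct := by
    by_contra h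
    push_neg at h
    exact hne (funext fun j => h j)
  classical
  set sset := Finset.univ.filter (fun j => p j ≠ ct) with hs
  have hne' : sset.Nonempty := ⟨hex.choose, by simp [hs, hex.choose_spec]⟩
  set m := sset.max' hne' with hm
  have hmem : m ∈ sset := sset.max'_mem hne'
  have hpm : p m ≠ ct := (Finset.mem_filter.mp hmem).2
  have hmL : m ≠ LL t := fun h => hpm (h ▸ hL)
  rcases V_cases (p m) with h | ⟨y, hy⟩
  · exact absurd h hpm
  refine ⟨m, y, hmL, hy, fun j hj _ => ?_⟩
  by_contra hcon
  have hjs : j ∈ sset := by simp [hs, hcon]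
  exact absurd (sset.le_max' j hjs) (not_le.mpr hj)

lemma card_Cnd [NeZero t] (x : Fin r) :
    ((Tail (LL t) (cc r t)).filter (fun p => Cnd p x)).card
      = ∑ m ∈ Finset.univ.erase (LL t), (1 + r) ^ (m : ℕ) := by
  have key : ∀ a b : Fin t, b ≠ LL t → a < b →
      ∀ p : W r t, p ∈ Tail a (gg a x) → p ∈ Tail b (gg b x) → False := by
    intro a b hbL hab p hpa hpb
    have h1 := (Finset.mem_filter.mp hpa).2 b (le_of_lt hab)
    have h2 := (Finset.mem_filter.mp hpb).2 b le_rfl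
    rw [gg, if_neg (ne_of_gt hab), if_neg hbL] at h1
    rw [gg, if_pos rfl] at h2
    exact ct_ne_inr x (h2.symm.trans h1)
  rw [Cnd_decomp, Finset.card_biUnion]
  · exact Finset.sum_congr rfl fun m _ => card_Tail m _
  · intro a ha b hb hab
    rw [Function.onFun, Finset.disjoint_left]
    intro p hpa hpb
    rcases lt_or_gt_of_ne hab with h | h
    · exact key a b (Finset.ne_of_mem_erase hb) h p hpa hpb
    · exact key b a (Finset.ne_of_mem_erase ha) h p hpb hpa

lemma cc_mem_Cnd [NeZero t] (ht : 2 ≤ t) (x : Fin r) :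
    cc r t ∈ (Tail (LL t) (cc r t)).filter (fun p => Cnd p x) :=
  Finset.mem_filter.mpr ⟨cc_mem_Tail, Cnd_cc ht x⟩


lemma sum_Idx_eq [NeZero t] (f : Fin t → W r t → Fin r → ℝ) :
    ∑ q ∈ Idx r t, f q.1 q.2.1 q.2.2
      = ∑ i : Fin t, ∑ p ∈ Tail i (cc r t), ∑ x : Fin r, f i p x := by
  rw [show Idx r t = Finset.univ.filter
    (fun q : Fin t × W r t × Fin r => ∀ j, q.1 ≤ j → q.2.1 j = ct) from rfl]
  rw [Finset.sum_filter, Fintype.sum_prod_type]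
  simp only [Fintype.sum_prod_type]
  refine Finset.sum_congr rfl fun i _ => ?_
  simp only [Tail]
  rw [Finset.sum_filter]
  refine Finset.sum_congr rfl fun p _ => ?_
  by_cases hc : ∀ j, i ≤ j → p j = ct
  · rw [if_pos (show ∀ j, i ≤ j → p j = cc r t j from hc)]
    exact Finset.sum_congr rfl fun x _ => if_pos hc
  · rw [if_neg (show ¬ ∀ j, i ≤ j → p j = cc r t j from hc)]
    rw [Finset.sum_congr rfl fun x _ => if_neg hc, Finset.sum_const_zero]

lemma sum_ne_LL [NeZero t] (α : ℝ) {i : Fin t} (hi : i ≠ LL t) :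
    ∑ p ∈ Tail i (cc r t), ∑ x : Fin r,
      (((S r t).degree (U i p x) : ℝ) * ((S r t).degree (Vv i p x) : ℝ)) ^ α
    = (1 + r : ℝ) ^ (i : ℕ) * ((r : ℝ) * (2 * ((r : ℝ) + 1)) ^ α) := by
  have hval : ∀ (p : W r t) (x : Fin r),
      (((S r t).degree (U i p x) : ℝ) * ((S r t).degree (Vv i p x) : ℝ)) ^ α
        = (2 * ((r : ℝ) + 1)) ^ α := by
    intro p x
    rw [deg_U_ne hi, deg_V_ne hi]
    norm_num
  simp only [hval, Finset.sum_const, Finset.card_univ, Fintype.card_fin, nsmul_eq_mul,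
    card_Tail]
  push_cast
  ring_nf

lemma sum_LL [NeZero t] (hr : 2 ≤ r) (ht : 2 ≤ t) (α : ℝ) :
    ∑ p ∈ Tail (LL t) (cc r t), ∑ x : Fin r,
      (((S r t).degree (U (LL t) p x) : ℝ) * ((S r t).degree (Vv (LL t) p x) : ℝ)) ^ α
    = (r : ℝ) * (((r : ℝ) * 2) ^ α)
      + (r : ℝ) * (((∑ m ∈ Finset.univ.erase (LL t), (1 + r : ℝ) ^ (m : ℕ)) - 1)
          * ((((r : ℝ) + 1) * 2) ^ α)
        + (((1 + r : ℝ) ^ (t - 1) - 1)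
            - ((∑ m ∈ Finset.univ.erase (LL t), (1 + r : ℝ) ^ (m : ℕ)) - 1))
          * (((r : ℝ) + 1) ^ α)) := by
  rw [← Finset.add_sum_erase _ _ (cc_mem_Tail (r := r) (t := t))]
  have h1 : ∑ x : Fin r,
      (((S r t).degree (U (LL t) (cc r t) x) : ℝ)
        * ((S r t).degree (Vv (LL t) (cc r t) x) : ℝ)) ^ α
      = (r : ℝ) * (((r : ℝ) * 2) ^ α) := by
    have hv : ∀ x : Fin r,
        (((S r t).degree (U (LL t) (cc r t) x) : ℝ)
          * ((S r t).degree (Vv (LL t) (cc r t) x) : ℝ)) ^ α = (((r : ℝ) * 2) ^ α) := by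
      intro x
      rw [deg_U_last_cc (p := cc r t) (fun j _ => rfl), deg_V_last_C (Cnd_cc ht x)]
      norm_num
    simp only [hv, Finset.sum_const, Finset.card_univ, Fintype.card_fin, nsmul_eq_mul]
  rw [h1]
  congr 1
  rw [Finset.sum_comm]
  -- now ∑ x, ∑ p in erase, F
  have hψ1 : 1 ≤ ∑ m ∈ Finset.univ.erase (LL t), (1 + r) ^ (m : ℕ) := by
    have hmem : (⟨0, by omega⟩ : Fin t) ∈ Finset.univ.erase (LL t) := by
      refine Finset.mem_erase.mpr ⟨?_, Finset.mem_univ _⟩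
      simp only [ne_eq, Fin.ext_iff, LL]
      omega
    calc 1 = (1 + r) ^ ((⟨0, by omega⟩ : Fin t) : ℕ) := by norm_num
    _ ≤ _ := Finset.single_le_sum (f := fun m : Fin t => (1 + r) ^ (m : ℕ)) (fun m _ => Nat.zero_le _) hmem
  have hx : ∀ x : Fin r,
      ∑ p ∈ (Tail (LL t) (cc r t)).erase (cc r t),
        (((S r t).degree (U (LL t) p x) : ℝ) * ((S r t).degree (Vv (LL t) p x) : ℝ)) ^ α
      = ((∑ m ∈ Finset.univ.erase (LL t), (1 + r : ℝ) ^ (m : ℕ)) - 1)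
          * ((((r : ℝ) + 1) * 2) ^ α)
        + (((1 + r : ℝ) ^ (t - 1) - 1)
            - ((∑ m ∈ Finset.univ.erase (LL t), (1 + r : ℝ) ^ (m : ℕ)) - 1))
          * (((r : ℝ) + 1) ^ α) := by
    intro x
    rw [← Finset.sum_filter_add_sum_filter_not _ (fun p => Cnd p x)]
    have hdegU : ∀ p ∈ (Tail (LL t) (cc r t)).erase (cc r t),
        (S r t).degree (U (LL t) p x) = r + 1 := by
      intro p hp
      have hpe := Finset.mem_erase.mp hp
      obtain ⟨m, y, hm, hpm, hmax⟩ := exists_max (mem_Tail_LL.mp hpe.2) hpe.1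
      exact deg_U_last_ne hm hpm hmax
    have hsC : ∑ p ∈ ((Tail (LL t) (cc r t)).erase (cc r t)).filter (fun p => Cnd p x),
        (((S r t).degree (U (LL t) p x) : ℝ) * ((S r t).degree (Vv (LL t) p x) : ℝ)) ^ α
        = ((∑ m ∈ Finset.univ.erase (LL t), (1 + r : ℝ) ^ (m : ℕ)) - 1)
            * ((((r : ℝ) + 1) * 2) ^ α) := by
      rw [Finset.sum_congr rfl (fun p hp => ?_)]
      · rw [Finset.sum_const, nsmul_eq_mul]
        congr 1
        rw [Finset.filter_erase, Finset.card_erase_of_mem (cc_mem_Cnd ht x), card_Cnd]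
        push_cast [hψ1]
        ring
      · have hpf := Finset.mem_filter.mp hp
        rw [hdegU p hpf.1, deg_V_last_C hpf.2]
        push_cast
        ring
    have hsN : ∑ p ∈ ((Tail (LL t) (cc r t)).erase (cc r t)).filter (fun p => ¬ Cnd p x),
        (((S r t).degree (U (LL t) p x) : ℝ) * ((S r t).degree (Vv (LL t) p x) : ℝ)) ^ α
        = (((1 + r : ℝ) ^ (t - 1) - 1)
            - ((∑ m ∈ Finset.univ.erase (LL t), (1 + r : ℝ) ^ (m : ℕ)) - 1))
          * (((r : ℝ) + 1) ^ α) := by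
      rw [Finset.sum_congr rfl (fun p hp => ?_)]
      · rw [Finset.sum_const, nsmul_eq_mul]
        congr 1
        have hcards := Finset.card_filter_add_card_filter_not
          (s := (Tail (LL t) (cc r t)).erase (cc r t)) (fun p => Cnd p x)
        have hce : ((Tail (LL t) (cc r t)).erase (cc r t)).card = (1 + r) ^ (t - 1) - 1 := by
          rw [Finset.card_erase_of_mem cc_mem_Tail, card_Tail]
          rfl
        have hcf : (((Tail (LL t) (cc r t)).erase (cc r t)).filter (fun p => Cnd p x)).card
            = (∑ m ∈ Finset.univ.erase (LL t), (1 + r) ^ (m : ℕ)) - 1 := by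
          rw [Finset.filter_erase, Finset.card_erase_of_mem (cc_mem_Cnd ht x), card_Cnd]
        rw [hce, hcf] at hcards
        have hpow1 : 1 ≤ (1 + r) ^ (t - 1) := Nat.one_le_pow _ _ (by omega)
        have hNN : (((Tail (LL t) (cc r t)).erase (cc r t)).filter (fun p => ¬ Cnd p x)).card
            + (∑ m ∈ Finset.univ.erase (LL t), (1 + r) ^ (m : ℕ)) = (1 + r) ^ (t - 1) := by
          omega
        have hNR := congrArg (fun n : ℕ => (n : ℝ)) hNN
        push_cast at hNR
        linarith
      · have hpf := Finset.mem_filter.mp hp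
        rw [hdegU p hpf.1, deg_V_last_nC hpf.2]
        push_cast
        ring
    rw [hsC, hsN]
  rw [Finset.sum_congr rfl (fun x _ => hx x), Finset.sum_const, Finset.card_univ,
    Fintype.card_fin, nsmul_eq_mul]


lemma psi_geom [NeZero t] (hr : 2 ≤ r) (ht : 2 ≤ t) :
    (∑ m ∈ Finset.univ.erase (LL t), (1 + r : ℝ) ^ (m : ℕ)) * r
      = (1 + r : ℝ) ^ (t - 1) - 1 := by
  have hLL : ((LL t : Fin t) : ℕ) = t - 1 := rfl
  have h1 := Finset.sum_erase_add Finset.univ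
    (fun m : Fin t => (1 + r : ℝ) ^ (m : ℕ)) (Finset.mem_univ (LL t))
  rw [hLL] at h1
  have h2 : ∑ m : Fin t, (1 + r : ℝ) ^ (m : ℕ) = ∑ k ∈ Finset.range t, (1 + r : ℝ) ^ k :=
    Fin.sum_univ_eq_sum_range _ t
  have h3 : ∑ k ∈ Finset.range t, (1 + r : ℝ) ^ k
      = (∑ k ∈ Finset.range (t - 1), (1 + r : ℝ) ^ k) + (1 + r : ℝ) ^ (t - 1) := by
    conv_lhs => rw [show t = (t - 1) + 1 by omega]
    rw [Finset.sum_range_succ]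
  have h5 : (∑ m ∈ Finset.univ.erase (LL t), (1 + r : ℝ) ^ (m : ℕ))
      = ∑ k ∈ Finset.range (t - 1), (1 + r : ℝ) ^ k := by
    have := h1.trans (h2.trans h3)
    linarith
  rw [h5]
  have h4 := geom_sum_mul ((1 : ℝ) + r) (t - 1)
  have hr1 : ((1 : ℝ) + r) - 1 = (r : ℝ) := by ring
  rw [hr1] at h4
  exact h4

lemma randic_eq {V' : Type*} [Fintype V'] [DecidableEq V'] (G : SimpleGraph V')
    [DecidableRel G.Adj] (α : ℝ) :
    randic G α = ∑ e ∈ G.edgeFinset,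
      Sym2.lift ⟨fun u v => ((G.degree u : ℝ) * (G.degree v : ℝ)) ^ α,
        fun u v => by dsimp only; rw [mul_comm]⟩ e := by
  unfold randic
  congr!

end RStar

theorem randic_sierpinski_star {r t : ℕ} (hr : 2 ≤ r) (ht : 2 ≤ t) (α : ℝ) :
    randic (sierpinskiGraph (completeBipartiteGraph (Fin 1) (Fin r)) t) α =
      ((r : ℝ) + 1) ^ α * (((r : ℝ) + 1) ^ (t - 1) * ((r : ℝ) - 1) + 1) +
        (2 : ℝ) ^ α * (r : ℝ) ^ (α + 1) +
        (2 * ((r : ℝ) + 1)) ^ α * (2 * ((r : ℝ) + 1) ^ (t - 1) - (r : ℝ) - 2) := by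
  haveI : NeZero t := ⟨by omega⟩
  rw [RStar.randic_eq]
  rw [RStar.edge_decomp,
    Finset.sum_image (fun a ha b hb h =>
      RStar.Emap_injOn (Finset.mem_coe.mpr ha) (Finset.mem_coe.mpr hb) h)]
  simp only [RStar.Emap, Sym2.lift_mk]
  rw [RStar.sum_Idx_eq (fun i p x =>
    (((RStar.S r t).degree (RStar.U i p x) : ℝ)
      * ((RStar.S r t).degree (RStar.Vv i p x) : ℝ)) ^ α)]
  rw [← Finset.sum_erase_add _ _ (Finset.mem_univ (RStar.LL t))]
  rw [Finset.sum_congr rfl (fun i hi => RStar.sum_ne_LL α (Finset.ne_of_mem_erase hi))]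
  rw [RStar.sum_LL hr ht α]
  rw [← Finset.sum_mul]
  have hgeom : (∑ m ∈ Finset.univ.erase (RStar.LL t), (1 + (r : ℝ)) ^ (m : ℕ)) * r
      = (1 + (r : ℝ)) ^ (t - 1) - 1 := RStar.psi_geom hr ht
  have hA' : ((((r : ℝ)) + 1) * 2) ^ α = (2 * ((r : ℝ) + 1)) ^ α := by rw [mul_comm]
  have h2r : (r : ℝ) * (((r : ℝ) * 2) ^ α) = (2 : ℝ) ^ α * (r : ℝ) ^ (α + 1) := by
    rw [Real.mul_rpow (by positivity) (by norm_num),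
      Real.rpow_add_one (by positivity : (r : ℝ) ≠ 0)]
    ring
  have hcomm : ((1 : ℝ) + r) ^ (t - 1) = ((r : ℝ) + 1) ^ (t - 1) := by rw [add_comm]
  rw [hA', h2r, hcomm] at *
  linear_combination (2 * (2 * ((r : ℝ) + 1)) ^ α - ((r : ℝ) + 1) ^ α) * hgeom
end

section
/- For any real number α and any integers t ≥ 2 and n ≥ 3, the general Randić index of the Sierpiński graph S(P_n,t) built from the path P_n on n vertices satisfies R_α(S(P_n,t)) = 2^α n^{t−2}(n−3)(2^α n − 2^{α+2} + 2) + 3^α[2^{α+2}(n−3)(n^{t−2} − ψ(t−2)) + 4n^{t−2} − 2ψ(t−2)] + 2^{2α+1}(n^{t−2} − 2ψ(t−2)) + 3^α[3^α(n−3)(n^{t−2} + 5ψ(t−2)) + 2^{α+1}(n^{t−2} + 4ψ(t−2))]. -/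
open Finset

set_option linter.unusedSectionVars false
set_option linter.unusedVariables false
set_option linter.unreachableTactic false
set_option linter.unusedTactic false

open Fin

section RS

variable {V : Type*} [Fintype V] [DecidableEq V] (G : SimpleGraph V) [DecidableRel G.Adj]

/-- there is a suffix position `k` with `w k = c` and everything after it is `a`. -/
def RSPc {m : ℕ} (w : Fin m → V) (a c : V) : Prop :=
  ∃ k : Fin m, w k = c ∧ ∀ j, k < j → w j = a

/-- there is a suffix position `k` with `w k` adjacent to `a` and everything after is `a`. -/
def RSCw {m : ℕ} (G : SimpleGraph V) [DecidableRel G.Adj] (w : Fin m → V) (a : V) : Prop :=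
  ∃ k : Fin m, G.Adj (w k) a ∧ ∀ j, k < j → w j = a

instance {m : ℕ} (w : Fin m → V) (a c : V) : Decidable (RSPc w a c) := by
  unfold RSPc; infer_instance

instance {m : ℕ} (w : Fin m → V) (a : V) : Decidable (RSCw G w a) := by
  unfold RSCw; infer_instance

variable {m : ℕ}

/-- copy adjacency: same prefix, adjacent last letters. -/
def RSCAdj (x y : Fin (m + 1) → V) : Prop :=
  Fin.init y = Fin.init x ∧ G.Adj (x (last m)) (y (last m))

/-- bridge adjacency: adjacency at a level `i ≠ last`. -/
def RSBAdj (x y : Fin (m + 1) → V) : Prop :=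
  ∃ i : Fin (m + 1), i ≠ last m ∧ (∀ j, j < i → x j = y j) ∧ x i ≠ y i ∧
    G.Adj (x i) (y i) ∧ ∀ j, i < j → x j = y i ∧ y j = x i

instance (x y : Fin (m + 1) → V) : Decidable (RSCAdj G x y) := by
  unfold RSCAdj; infer_instance

instance (x y : Fin (m + 1) → V) : Decidable (RSBAdj G x y) := by
  unfold RSBAdj; infer_instance

lemma RS_sadj_iff (x y : Fin (m + 1) → V) :
    (sierpinskiGraph G (m + 1)).Adj x y ↔ RSCAdj G x y ∨ RSBAdj G x y := by
  constructor
  · rintro ⟨i, h1, h2, h3, h4⟩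
    by_cases hi : i = last m
    · subst hi
      left
      refine ⟨funext fun j => ?_, h3⟩
      exact (h1 j.castSucc (castSucc_lt_last j)).symm
    · right; exact ⟨i, hi, h1, h2, h3, h4⟩
  · rintro (⟨h1, h2⟩ | ⟨i, _, h⟩)
    · refine ⟨last m, fun j hj => ?_, h2.ne, h2, fun j hj => absurd hj (not_lt.2 (le_last j))⟩
      obtain ⟨k, rfl⟩ := Fin.exists_castSucc_eq.2 hj.ne
      exact (congrFun h1 k).symm
    · exact ⟨i, h⟩

lemma RS_not_both {x y : Fin (m + 1) → V} (hc : RSCAdj G x y) (hb : RSBAdj G x y) : False := by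
  obtain ⟨i, hil, _, hne, _⟩ := hb
  obtain ⟨k, rfl⟩ := Fin.exists_castSucc_eq.2 hil
  exact hne (congrFun hc.1 k).symm

lemma RS_badj_facts {x y : Fin (m + 1) → V} (h : RSBAdj G x y) :
    G.Adj (x (last m)) (y (last m)) ∧ RSPc (Fin.init x) (x (last m)) (y (last m)) ∧
      RSCw G (Fin.init x) (x (last m)) ∧ RSCw G (Fin.init y) (y (last m)) := by
  obtain ⟨i, hil, hpre, hne, hadj, htail⟩ := h
  obtain ⟨k, rfl⟩ := Fin.exists_castSucc_eq.2 hil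
  have hlast := htail (last m) (castSucc_lt_last k)
  have hyi : y k.castSucc = x (last m) := hlast.1.symm
  have hyl : y (last m) = x k.castSucc := hlast.2
  have hadj' : G.Adj (x (last m)) (y (last m)) := by
    rw [hyl, ← hyi]; exact hadj.symm
  refine ⟨hadj', ⟨k, ?_, ?_⟩, ⟨k, ?_, ?_⟩, ⟨k, ?_, ?_⟩⟩
  · show x k.castSucc = y (last m); rw [hyl]
  · intro j hj
    show x j.castSucc = x (last m)
    rw [(htail j.castSucc (castSucc_lt_castSucc_iff.2 hj)).1, hyi]
  · show G.Adj (x k.castSucc) (x (last m)); rw [← hyi]; exact hadj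
  · intro j hj
    show x j.castSucc = x (last m)
    rw [(htail j.castSucc (castSucc_lt_castSucc_iff.2 hj)).1, hyi]
  · show G.Adj (y k.castSucc) (y (last m)); rw [hyi]; exact hadj'
  · intro j hj
    show y j.castSucc = y (last m)
    rw [(htail j.castSucc (castSucc_lt_castSucc_iff.2 hj)).2, hyl]

lemma RS_badj_tail {x y : Fin (m + 1) → V} (h : RSBAdj G x y) :
    ∃ i : Fin (m + 1), i ≠ last m ∧ (∀ j, i < j → x j = x (last m)) ∧ x i ≠ x (last m) ∧
      (∀ j, j < i → y j = x j) ∧ y i = x (last m) ∧ ∀ j, i < j → y j = x i := by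
  obtain ⟨i, hil, hpre, hne, hadj, htail⟩ := h
  have hil' : i < last m := lt_of_le_of_ne (le_last i) hil
  have hyi : y i = x (last m) := (htail (last m) hil').1.symm
  rw [hyi] at hne
  refine ⟨i, hil, fun j hj => by rw [(htail j hj).1, hyi], hne,
    fun j hj => (hpre j hj).symm, hyi, fun j hj => (htail j hj).2⟩

lemma RS_badj_unique {x y y' : Fin (m + 1) → V} (h : RSBAdj G x y) (h' : RSBAdj G x y') :
    y = y' := by
  obtain ⟨i, hil, ht1, hne1, hp1, hv1, hs1⟩ := RS_badj_tail G h
  obtain ⟨i', hil', ht1', hne1', hp1', hv1', hs1'⟩ := RS_badj_tail G h'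
  have hii : i = i' := by
    rcases lt_trichotomy i i' with hlt | heq | hlt
    · exact absurd (ht1 i' hlt) hne1'
    · exact heq
    · exact absurd (ht1' i hlt) hne1
  subst hii
  funext j
  rcases lt_trichotomy j i with hj | rfl | hj
  · rw [hp1 j hj, hp1' j hj]
  · rw [hv1, hv1']
  · rw [hs1 j hj, hs1' j hj]

lemma RS_badj_exists {x : Fin (m + 1) → V} {c : V} (hadj : G.Adj (x (last m)) c)
    (hpc : RSPc (Fin.init x) (x (last m)) c) :
    ∃ y, RSBAdj G x y ∧ y (last m) = c := by
  obtain ⟨k, hk1, hk2⟩ := hpc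
  have hk1' : x k.castSucc = c := hk1
  set y : Fin (m + 1) → V :=
    fun j => if j < k.castSucc then x j else if j = k.castSucc then x (last m) else c with hy
  have hyk : y k.castSucc = x (last m) := by simp [hy]
  have hylt : ∀ j, j < k.castSucc → y j = x j := fun j hj => by simp [hy, hj]
  have hygt : ∀ j, k.castSucc < j → y j = c := fun j hj => by
    simp [hy, not_lt.2 hj.le, hj.ne']
  have hyl : y (last m) = c := hygt _ (castSucc_lt_last k)
  refine ⟨y, ⟨k.castSucc, (castSucc_lt_last k).ne, ?_, ?_, ?_, ?_⟩, hyl⟩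
  · intro j hj; exact (hylt j hj).symm
  · rw [hyk, hk1']; exact fun hc => hadj.ne' hc
  · rw [hyk, hk1']; exact hadj.symm
  · intro j hj
    rw [hyk, hygt j hj, hk1']
    refine ⟨?_, rfl⟩
    rcases eq_or_ne j (last m) with rfl | hjl
    · rfl
    · obtain ⟨j', rfl⟩ := Fin.exists_castSucc_eq.2 hjl
      exact hk2 j' (castSucc_lt_castSucc_iff.1 hj)

/-- the snoc equivalence. -/
def RSsnocE (m : ℕ) (V : Type*) : ((Fin m → V) × V) ≃ (Fin (m + 1) → V) where
  toFun p := Fin.snoc p.1 p.2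
  invFun y := (Fin.init y, y (last m))
  left_inv p := by simp
  right_inv y := by simp

lemma RS_sum_ite_unique {M : Type*} [AddCommMonoid M] {p : V → Prop} [DecidablePred p]
    (v : M) (hu : ∀ c c', p c → p c' → c = c') :
    ∑ c, (if p c then v else 0) = if ∃ c, p c then v else 0 := by
  by_cases hex : ∃ c, p c
  · obtain ⟨c₀, hc₀⟩ := hex
    rw [Finset.sum_eq_single c₀ (fun c _ hne => if_neg fun hc => hne (hu c c₀ hc hc₀))
      (by simp), if_pos hc₀, if_pos ⟨c₀, hc₀⟩]
  · rw [Finset.sum_eq_zero (fun c _ => if_neg fun hc => hex ⟨c, hc⟩), if_neg hex]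

lemma RS_copy_sum {M : Type*} [AddCommMonoid M] (x : Fin (m + 1) → V)
    (F : (Fin (m + 1) → V) → M) :
    ∑ y, (if RSCAdj G x y then F y else 0) =
      ∑ c, (if G.Adj (x (last m)) c then F (Fin.snoc (Fin.init x) c) else 0) := by
  rw [← (RSsnocE m V).sum_comp (fun y => if RSCAdj G x y then F y else 0)]
  rw [Fintype.sum_prod_type]
  have : ∀ (w : Fin m → V) (c : V),
      (if RSCAdj G x (RSsnocE m V (w, c)) then F (RSsnocE m V (w, c)) else 0)
        = if w = Fin.init x then (if G.Adj (x (last m)) c then F (Fin.snoc (Fin.init x) c) else 0) else 0 := by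
    intro w c
    have h1 : RSCAdj G x (RSsnocE m V (w, c)) ↔ (w = Fin.init x ∧ G.Adj (x (last m)) c) := by
      unfold RSCAdj RSsnocE
      simp
    by_cases hw : w = Fin.init x
    · subst hw
      by_cases hadj : G.Adj (x (last m)) c
      · rw [if_pos (h1.2 ⟨rfl, hadj⟩), if_pos rfl, if_pos hadj]; rfl
      · rw [if_neg (fun h => hadj (h1.1 h).2), if_pos rfl, if_neg hadj]
    · rw [if_neg (fun h => hw (h1.1 h).1), if_neg hw]
  simp only [this]
  rw [Finset.sum_comm]
  refine Finset.sum_congr rfl fun c _ => ?_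
  rw [Finset.sum_ite_eq' univ (Fin.init x)
    (fun _ => if G.Adj (x (last m)) c then F (Fin.snoc (Fin.init x) c) else 0)]
  simp

lemma RS_bridge_sum {M : Type*} [AddCommMonoid M] (x : Fin (m + 1) → V)
    (F : (Fin (m + 1) → V) → M) (Gv : V → M)
    (hFG : ∀ y, RSBAdj G x y → F y = Gv (y (last m))) :
    ∑ y, (if RSBAdj G x y then F y else 0) =
      ∑ c, (if G.Adj (x (last m)) c ∧ RSPc (Fin.init x) (x (last m)) c then Gv c else 0) := by
  by_cases hex : ∃ y, RSBAdj G x y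
  · obtain ⟨y₀, hy₀⟩ := hex
    obtain ⟨hadj, hpc, _, _⟩ := RS_badj_facts G hy₀
    rw [Finset.sum_eq_single y₀
      (fun y _ hne => if_neg (fun hy => hne (RS_badj_unique G hy hy₀))) (by simp),
      if_pos hy₀, hFG y₀ hy₀,
      Finset.sum_eq_single (y₀ (last m)) (fun c _ hne => if_neg (fun hc => by
        obtain ⟨y', hy', hy'l⟩ := RS_badj_exists G hc.1 hc.2
        exact hne (by rw [← hy'l, RS_badj_unique G hy' hy₀]))) (by simp),
      if_pos ⟨hadj, hpc⟩]
  · rw [Finset.sum_eq_zero (fun y _ => if_neg (fun hy => hex ⟨y, hy⟩)),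
      Finset.sum_eq_zero (fun c _ => if_neg (fun hc => by
        obtain ⟨y', hy', _⟩ := RS_badj_exists G hc.1 hc.2
        exact hex ⟨y', hy'⟩))]

lemma RS_scw_iff (w : Fin m → V) (a : V) :
    RSCw G w a ↔ ∃ c, G.Adj a c ∧ RSPc w a c := by
  constructor
  · rintro ⟨k, h1, h2⟩; exact ⟨w k, h1.symm, k, rfl, h2⟩
  · rintro ⟨c, h1, k, h2, h3⟩; exact ⟨k, by rw [h2]; exact h1.symm, h3⟩

lemma RS_spc_c_unique {w : Fin m → V} {a c c' : V} (hc : c ≠ a) (hc' : c' ≠ a)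
    (h : RSPc w a c) (h' : RSPc w a c') : c = c' := by
  obtain ⟨k, h1, h2⟩ := h
  obtain ⟨k', h1', h2'⟩ := h'
  rcases lt_trichotomy k k' with hlt | rfl | hlt
  · exact absurd (h2 k' hlt) (h1' ▸ hc')
  · rw [← h1, h1']
  · exact absurd (h2' k hlt) (h1 ▸ hc)

/-- The degree of a vertex in a (generalized) Sierpiński graph. -/
lemma RS_degree (x : Fin (m + 1) → V) :
    (sierpinskiGraph G (m + 1)).degree x =
      G.degree (x (last m)) + (if RSCw G (Fin.init x) (x (last m)) then 1 else 0) := by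
  rw [SimpleGraph.degree, SimpleGraph.neighborFinset_eq_filter, Finset.card_filter]
  have key : ∀ y, (if (sierpinskiGraph G (m + 1)).Adj x y then (1 : ℕ) else 0) =
      (if RSCAdj G x y then (1 : ℕ) else 0) + (if RSBAdj G x y then (1 : ℕ) else 0) := by
    intro y
    by_cases h1 : RSCAdj G x y <;> by_cases h2 : RSBAdj G x y
    · exact absurd (RS_not_both G h1 h2) not_false
    all_goals simp [RS_sadj_iff, h1, h2]
  simp only [key]
  rw [Finset.sum_add_distrib, RS_copy_sum G x (fun _ => (1 : ℕ)),
    RS_bridge_sum G x (fun _ => (1 : ℕ)) (fun _ => (1 : ℕ)) (fun _ _ => rfl)]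
  congr 1
  · rw [SimpleGraph.degree, SimpleGraph.neighborFinset_eq_filter, Finset.card_filter]
  · simp only [RS_scw_iff G (Fin.init x) (x (last m))]
    rw [RS_sum_ite_unique (1 : ℕ) (fun c c' hc hc' =>
      RS_spc_c_unique hc.1.ne' hc'.1.ne' hc.2 hc'.2)]

lemma RS_spc_snoc_iff {a c : V} (hca : c ≠ a) (w : Fin m → V) (z : V) :
    RSPc (Fin.snoc w z) a c ↔ z = c ∨ (z = a ∧ RSPc w a c) := by
  constructor
  · rintro ⟨k, h1, h2⟩
    rcases Fin.eq_castSucc_or_eq_last k with ⟨k', rfl⟩ | rfl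
    · right
      have hz : z = a := by
        have := h2 (last m) (castSucc_lt_last k')
        rwa [Fin.snoc_last] at this
      refine ⟨hz, k', by rwa [Fin.snoc_castSucc] at h1, fun j hj => ?_⟩
      have := h2 j.castSucc (castSucc_lt_castSucc_iff.2 hj)
      rwa [Fin.snoc_castSucc] at this
    · left; rwa [Fin.snoc_last] at h1
  · rintro (rfl | ⟨rfl, k, h1, h2⟩)
    · exact ⟨last m, Fin.snoc_last _ _, fun j hj => absurd hj (not_lt.2 (le_last j))⟩
    · refine ⟨k.castSucc, by rwa [Fin.snoc_castSucc], fun j hj => ?_⟩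
      rcases Fin.eq_castSucc_or_eq_last j with ⟨j', rfl⟩ | rfl
      · rw [Fin.snoc_castSucc]; exact h2 j' (castSucc_lt_castSucc_iff.1 hj)
      · rw [Fin.snoc_last]

lemma RS_scw_snoc_iff (a : V) (w : Fin m → V) (z : V) :
    RSCw G (Fin.snoc w z) a ↔ G.Adj z a ∨ (z = a ∧ RSCw G w a) := by
  constructor
  · rintro ⟨k, h1, h2⟩
    rcases Fin.eq_castSucc_or_eq_last k with ⟨k', rfl⟩ | rfl
    · right
      have hz : z = a := by
        have := h2 (last m) (castSucc_lt_last k')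
        rwa [Fin.snoc_last] at this
      refine ⟨hz, k', by rwa [Fin.snoc_castSucc] at h1, fun j hj => ?_⟩
      have := h2 j.castSucc (castSucc_lt_castSucc_iff.2 hj)
      rwa [Fin.snoc_castSucc] at this
    · left; rwa [Fin.snoc_last] at h1
  · rintro (hz | ⟨rfl, k, h1, h2⟩)
    · exact ⟨last m, by rwa [Fin.snoc_last], fun j hj => absurd hj (not_lt.2 (le_last j))⟩
    · refine ⟨k.castSucc, by rwa [Fin.snoc_castSucc], fun j hj => ?_⟩
      rcases Fin.eq_castSucc_or_eq_last j with ⟨j', rfl⟩ | rfl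
      · rw [Fin.snoc_castSucc]; exact h2 j' (castSucc_lt_castSucc_iff.1 hj)
      · rw [Fin.snoc_last]

lemma RS_spc_count (a c : V) (hca : c ≠ a) :
    ∀ m : ℕ, (univ.filter fun w : Fin m → V => RSPc w a c).card = psi (Fintype.card V) m := by
  intro m
  induction m with
  | zero =>
    have h0 : ∀ w : Fin 0 → V, ¬ RSPc w a c := by rintro w ⟨k, _⟩; exact k.elim0
    rw [Finset.filter_false_of_mem (fun w _ => h0 w), Finset.card_empty]
    simp [psi]
  | succ m ih =>
    rw [Finset.card_filter, ← (RSsnocE m V).sum_comp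
      (fun y => if RSPc y a c then (1 : ℕ) else 0), Fintype.sum_prod_type]
    have key : ∀ (w : Fin m → V) (z : V),
        (if RSPc ((RSsnocE m V) (w, z)) a c then (1 : ℕ) else 0) =
          (if z = c then 1 else 0) + (if z = a then (if RSPc w a c then 1 else 0) else 0) := by
      intro w z
      have hsn : (RSsnocE m V) (w, z) = Fin.snoc w z := rfl
      rw [hsn]
      by_cases h1 : z = c
      · rw [if_pos ((RS_spc_snoc_iff hca w z).2 (Or.inl h1)), if_pos h1,
          if_neg (fun h2 : z = a => hca (h1 ▸ h2 ▸ rfl))]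
      · by_cases h3 : z = a
        · by_cases h2 : RSPc w a c
          · rw [if_pos ((RS_spc_snoc_iff hca w z).2 (Or.inr ⟨h3, h2⟩)), if_neg h1,
              if_pos h3, if_pos h2]
          · rw [if_neg (fun h => by
              rcases (RS_spc_snoc_iff hca w z).1 h with h' | h'
              exacts [h1 h', h2 h'.2]), if_neg h1, if_pos h3, if_neg h2]
        · rw [if_neg (fun h => by
            rcases (RS_spc_snoc_iff hca w z).1 h with h' | h'
            exacts [h1 h', h3 h'.1]), if_neg h1, if_neg h3]
    simp only [key]
    simp only [Finset.sum_add_distrib]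
    have e1 : ∀ w : Fin m → V, (∑ z : V, if z = c then (1:ℕ) else 0) = 1 := fun w => by
      rw [Finset.sum_ite_eq' univ c (fun _ => (1:ℕ))]; simp
    have e2 : ∀ w : Fin m → V,
        (∑ z : V, if z = a then (if RSPc w a c then (1:ℕ) else 0) else 0)
          = (if RSPc w a c then (1:ℕ) else 0) := fun w => by
      rw [Finset.sum_ite_eq' univ a (fun _ => if RSPc w a c then (1:ℕ) else 0)]; simp
    rw [Finset.sum_congr rfl (fun w _ => e1 w), Finset.sum_congr rfl (fun w _ => e2 w),
      ← Finset.card_filter, ih, Finset.sum_const, Finset.card_univ, Fintype.card_fun,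
      Fintype.card_fin]
    simp only [psi, Finset.sum_range_succ, smul_eq_mul, mul_one]
    ring

lemma RS_scw_count (a : V) :
    ∀ m : ℕ, (univ.filter fun w : Fin m → V => RSCw G w a).card =
      G.degree a * psi (Fintype.card V) m := by
  intro m
  induction m with
  | zero =>
    have h0 : ∀ w : Fin 0 → V, ¬ RSCw G w a := by rintro w ⟨k, _⟩; exact k.elim0
    rw [Finset.filter_false_of_mem (fun w _ => h0 w), Finset.card_empty]
    simp [psi]
  | succ m ih =>
    rw [Finset.card_filter, ← (RSsnocE m V).sum_comp
      (fun y => if RSCw G y a then (1 : ℕ) else 0), Fintype.sum_prod_type]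
    have key : ∀ (w : Fin m → V) (z : V),
        (if RSCw G ((RSsnocE m V) (w, z)) a then (1 : ℕ) else 0) =
          (if G.Adj z a then 1 else 0) + (if z = a then (if RSCw G w a then 1 else 0) else 0) := by
      intro w z
      have hsn : (RSsnocE m V) (w, z) = Fin.snoc w z := rfl
      rw [hsn]
      by_cases h1 : G.Adj z a
      · rw [if_pos ((RS_scw_snoc_iff G a w z).2 (Or.inl h1)), if_pos h1,
          if_neg (fun h2 : z = a => h1.ne (h2 ▸ rfl))]
      · by_cases h3 : z = a
        · by_cases h2 : RSCw G w a
          · rw [if_pos ((RS_scw_snoc_iff G a w z).2 (Or.inr ⟨h3, h2⟩)), if_neg h1,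
              if_pos h3, if_pos h2]
          · rw [if_neg (fun h => by
              rcases (RS_scw_snoc_iff G a w z).1 h with h' | h'
              exacts [h1 h', h2 h'.2]), if_neg h1, if_pos h3, if_neg h2]
        · rw [if_neg (fun h => by
            rcases (RS_scw_snoc_iff G a w z).1 h with h' | h'
            exacts [h1 h', h3 h'.1]), if_neg h1, if_neg h3]
    simp only [key]
    simp only [Finset.sum_add_distrib]
    have e1 : ∀ w : Fin m → V, (∑ z : V, if G.Adj z a then (1:ℕ) else 0) = G.degree a :=
      fun w => by
        rw [SimpleGraph.degree, SimpleGraph.neighborFinset_eq_filter, Finset.card_filter]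
        exact Finset.sum_congr rfl fun z _ => if_congr (G.adj_comm z a) rfl rfl
    have e2 : ∀ w : Fin m → V,
        (∑ z : V, if z = a then (if RSCw G w a then (1:ℕ) else 0) else 0)
          = (if RSCw G w a then (1:ℕ) else 0) := fun w => by
      rw [Finset.sum_ite_eq' univ a (fun _ => if RSCw G w a then (1:ℕ) else 0)]; simp
    rw [Finset.sum_congr rfl (fun w _ => e1 w), Finset.sum_congr rfl (fun w _ => e2 w),
      ← Finset.card_filter, ih, Finset.sum_const, Finset.card_univ, Fintype.card_fun,
      Fintype.card_fin]
    simp only [psi, Finset.sum_range_succ, smul_eq_mul]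
    ring

lemma RS_joint_count {a b : V} (hab : G.Adj a b)
    (hnc : ∀ z : V, ¬(G.Adj z a ∧ G.Adj z b)) (m : ℕ) :
    (univ.filter fun w : Fin (m + 1) → V => RSCw G w a ∧ RSCw G w b).card =
      G.degree a * psi (Fintype.card V) m + G.degree b * psi (Fintype.card V) m := by
  rw [Finset.card_filter, ← (RSsnocE m V).sum_comp
    (fun y => if RSCw G y a ∧ RSCw G y b then (1 : ℕ) else 0), Fintype.sum_prod_type]
  have key : ∀ (w : Fin m → V) (z : V),
      (if RSCw G ((RSsnocE m V) (w, z)) a ∧ RSCw G ((RSsnocE m V) (w, z)) b then (1 : ℕ) else 0)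
        = (if z = a then (if RSCw G w a then 1 else 0) else 0)
          + (if z = b then (if RSCw G w b then 1 else 0) else 0) := by
    intro w z
    have hsn : (RSsnocE m V) (w, z) = Fin.snoc w z := rfl
    rw [hsn]
    have hiff : (RSCw G (Fin.snoc w z) a ∧ RSCw G (Fin.snoc w z) b) ↔
        ((z = a ∧ RSCw G w a) ∨ (z = b ∧ RSCw G w b)) := by
      rw [RS_scw_snoc_iff, RS_scw_snoc_iff]
      constructor
      · rintro ⟨h1 | h1, h2 | h2⟩
        · exact absurd ⟨h1, h2⟩ (hnc z)
        · exact Or.inr h2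
        · exact Or.inl h1
        · exact Or.inl h1
      · rintro (⟨rfl, h⟩ | ⟨rfl, h⟩)
        · exact ⟨Or.inr ⟨rfl, h⟩, Or.inl hab⟩
        · exact ⟨Or.inl hab.symm, Or.inr ⟨rfl, h⟩⟩
    by_cases h1 : z = a
    · have h1b : z ≠ b := fun h => hab.ne (h1 ▸ h ▸ rfl)
      by_cases h2 : RSCw G w a
      · rw [if_pos (hiff.2 (Or.inl ⟨h1, h2⟩)), if_pos h1, if_pos h2, if_neg h1b]
      · rw [if_neg (fun h => by
          rcases hiff.1 h with h' | h'
          exacts [h2 h'.2, h1b h'.1]), if_pos h1, if_neg h2, if_neg h1b]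
    · by_cases h3 : z = b
      · by_cases h2 : RSCw G w b
        · rw [if_pos (hiff.2 (Or.inr ⟨h3, h2⟩)), if_neg h1, if_pos h3, if_pos h2]
        · rw [if_neg (fun h => by
            rcases hiff.1 h with h' | h'
            exacts [h1 h'.1, h2 h'.2]), if_neg h1, if_pos h3, if_neg h2]
      · rw [if_neg (fun h => by
          rcases hiff.1 h with h' | h'
          exacts [h1 h'.1, h3 h'.1]), if_neg h1, if_neg h3]
  simp only [key]
  simp only [Finset.sum_add_distrib]
  have e2 : ∀ (u : V) (w : Fin m → V),
      (∑ z : V, if z = u then (if RSCw G w u then (1:ℕ) else 0) else 0)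
        = (if RSCw G w u then (1:ℕ) else 0) := fun u w => by
    rw [Finset.sum_ite_eq' univ u (fun _ => if RSCw G w u then (1:ℕ) else 0)]; simp
  rw [Finset.sum_congr rfl (fun w _ => e2 a w), Finset.sum_congr rfl (fun w _ => e2 b w),
    ← Finset.card_filter, ← Finset.card_filter, RS_scw_count, RS_scw_count]

end RS

section RSPath

open SimpleGraph

instance RSpathDec {n : ℕ} : DecidableRel (pathGraph n).Adj := fun a b =>
  decidable_of_iff _ (pathGraph_adj (n := n) (u := a) (v := b)).symm

lemma RS_path_no_common {n : ℕ} {a b : Fin n} (hab : (pathGraph n).Adj a b) :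
    ∀ z : Fin n, ¬((pathGraph n).Adj z a ∧ (pathGraph n).Adj z b) := by
  intro z hz
  obtain ⟨h1, h2⟩ := hz
  rw [pathGraph_adj] at hab h1 h2
  omega

/-- degree table for the path. -/
def RSd (N : ℕ) : ℕ → ℕ := fun k => if k = 0 ∨ k = N + 2 then 1 else 2

lemma RS_path_degree {N : ℕ} (a : Fin (N + 3)) :
    (pathGraph (N + 3)).degree a = RSd N a.val := by
  rw [SimpleGraph.degree, SimpleGraph.neighborFinset_eq_filter, Finset.card_filter]
  have key : ∀ c : Fin (N + 3), (if (pathGraph (N + 3)).Adj a c then (1 : ℕ) else 0)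
      = (if c.val = a.val + 1 then 1 else 0) + (if c.val + 1 = a.val then 1 else 0) := by
    intro c
    have : (pathGraph (N + 3)).Adj a c ↔ (a.val + 1 = c.val ∨ c.val + 1 = a.val) :=
      pathGraph_adj
    rw [if_congr this rfl rfl]
    split_ifs <;> omega
  rw [Finset.sum_congr rfl (fun c _ => key c), Finset.sum_add_distrib]
  have SA : (∑ c : Fin (N + 3), if c.val = a.val + 1 then (1 : ℕ) else 0)
      = if a.val + 1 < N + 3 then 1 else 0 := by
    by_cases h : a.val + 1 < N + 3
    · rw [if_pos h, Finset.sum_eq_single (⟨a.val + 1, h⟩ : Fin (N + 3))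
        (fun c _ hne => if_neg (fun hc => hne (Fin.ext hc)))
        (fun h' => absurd (Finset.mem_univ _) h'), if_pos rfl]
    · rw [if_neg h, Finset.sum_eq_zero (fun c _ => if_neg (fun hc => h (by omega)))]
  have SB : (∑ c : Fin (N + 3), if c.val + 1 = a.val then (1 : ℕ) else 0)
      = if a.val ≠ 0 then 1 else 0 := by
    by_cases h : a.val ≠ 0
    · have hlt : a.val - 1 < N + 3 := lt_of_le_of_lt (Nat.sub_le _ _) a.isLt
      rw [if_pos h, Finset.sum_eq_single (⟨a.val - 1, hlt⟩ : Fin (N + 3))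
        (fun c _ hne => if_neg (fun hc => hne (Fin.ext (show c.val = a.val - 1 by omega))))
        (fun h' => absurd (Finset.mem_univ _) h'),
        if_pos (show (a.val - 1) + 1 = a.val by omega)]
    · rw [if_neg h, Finset.sum_eq_zero (fun c _ => if_neg (by omega))]
  rw [SA, SB]
  have := a.isLt
  unfold RSd
  split_ifs <;> omega

lemma RS_path_sum_adj (N : ℕ) (F : ℕ → ℕ → ℝ) :
    (∑ a : Fin (N + 3), ∑ c : Fin (N + 3), if (pathGraph (N + 3)).Adj a c then
        F ((pathGraph (N + 3)).degree a) ((pathGraph (N + 3)).degree c) else 0)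
      = 2 * F 1 2 + 2 * F 2 1 + 2 * (N : ℝ) * F 2 2 := by
  have key : ∀ a c : Fin (N + 3), (if (pathGraph (N + 3)).Adj a c then
        F ((pathGraph (N + 3)).degree a) ((pathGraph (N + 3)).degree c) else 0)
      = (if c.val = a.val + 1 then F (RSd N a.val) (RSd N c.val) else 0)
        + (if c.val + 1 = a.val then F (RSd N a.val) (RSd N c.val) else 0) := by
    intro a c
    have hiff : (pathGraph (N + 3)).Adj a c ↔ (a.val + 1 = c.val ∨ c.val + 1 = a.val) :=
      pathGraph_adj
    rw [if_congr hiff rfl rfl, RS_path_degree a, RS_path_degree c]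
    by_cases h1 : c.val = a.val + 1 <;> by_cases h2 : c.val + 1 = a.val
    · omega
    · rw [if_pos (Or.inl h1.symm), if_pos h1, if_neg h2, add_zero]
    · rw [if_pos (Or.inr h2), if_neg h1, if_pos h2, zero_add]
    · rw [if_neg (by omega), if_neg h1, if_neg h2, add_zero]
  simp only [key]
  simp only [Finset.sum_add_distrib]
  have inner1 : ∀ a : Fin (N + 3),
      (∑ c : Fin (N + 3), if c.val = a.val + 1 then F (RSd N a.val) (RSd N c.val) else 0)
        = if a.val + 1 < N + 3 then F (RSd N a.val) (RSd N (a.val + 1)) else 0 := by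
    intro a
    by_cases h : a.val + 1 < N + 3
    · rw [if_pos h, Finset.sum_eq_single (⟨a.val + 1, h⟩ : Fin (N + 3))
        (fun c _ hne => if_neg (fun hc => hne (Fin.ext hc)))
        (fun h' => absurd (Finset.mem_univ _) h'), if_pos rfl]
    · rw [if_neg h, Finset.sum_eq_zero (fun c _ => if_neg (fun hc => h (by omega)))]
  have inner2 : ∀ a : Fin (N + 3),
      (∑ c : Fin (N + 3), if c.val + 1 = a.val then F (RSd N a.val) (RSd N c.val) else 0)
        = if a.val ≠ 0 then F (RSd N a.val) (RSd N (a.val - 1)) else 0 := by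
    intro a
    by_cases h : a.val ≠ 0
    · have hlt : a.val - 1 < N + 3 := lt_of_le_of_lt (Nat.sub_le _ _) a.isLt
      rw [if_pos h, Finset.sum_eq_single (⟨a.val - 1, hlt⟩ : Fin (N + 3))
        (fun c _ hne => if_neg (fun hc => hne (Fin.ext (show c.val = a.val - 1 by omega))))
        (fun h' => absurd (Finset.mem_univ _) h'),
        if_pos (show (a.val - 1) + 1 = a.val by omega)]
    · rw [if_neg h, Finset.sum_eq_zero (fun c _ => if_neg (by omega))]
  rw [Finset.sum_congr rfl (fun a _ => inner1 a), Finset.sum_congr rfl (fun a _ => inner2 a)]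
  rw [Fin.sum_univ_eq_sum_range
      (fun k => if k + 1 < N + 3 then F (RSd N k) (RSd N (k + 1)) else 0) (N + 3),
    Fin.sum_univ_eq_sum_range
      (fun k => if k ≠ 0 then F (RSd N k) (RSd N (k - 1)) else 0) (N + 3)]
  have d0 : RSd N 0 = 1 := by unfold RSd; rw [if_pos (Or.inl rfl)]
  have dtop : RSd N (N + 2) = 1 := by unfold RSd; rw [if_pos (Or.inr rfl)]
  have dmid : ∀ k, k ≠ 0 → k ≠ N + 2 → RSd N k = 2 := by
    intro k h1 h2; unfold RSd; rw [if_neg (by omega)]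
  have hS1 : (∑ k ∈ Finset.range (N + 3),
      if k + 1 < N + 3 then F (RSd N k) (RSd N (k + 1)) else 0)
        = F 1 2 + (N : ℝ) * F 2 2 + F 2 1 := by
    rw [Finset.sum_range_succ, Finset.sum_range_succ, Finset.sum_range_succ']
    have m1 : ∀ k ∈ Finset.range N,
        (if k + 1 + 1 < N + 3 then F (RSd N (k + 1)) (RSd N (k + 1 + 1)) else 0) = F 2 2 := by
      intro k hk
      rw [Finset.mem_range] at hk
      rw [if_pos (by omega), dmid (k + 1) (by omega) (by omega),
        dmid (k + 1 + 1) (by omega) (by omega)]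
    rw [Finset.sum_congr rfl m1, Finset.sum_const,
      if_neg (by omega : ¬ (N + 2 + 1 < N + 3)), if_pos (by omega : N + 1 + 1 < N + 3),
      if_pos (by omega : 0 + 1 < N + 3), d0, dtop, dmid (N + 1) (by omega) (by omega),
      dmid (0 + 1) (by omega) (by omega), nsmul_eq_mul, Finset.card_range]
    ring
  have hS2 : (∑ k ∈ Finset.range (N + 3),
      if k ≠ 0 then F (RSd N k) (RSd N (k - 1)) else 0)
        = F 1 2 + (N : ℝ) * F 2 2 + F 2 1 := by
    rw [Finset.sum_range_succ, Finset.sum_range_succ', Finset.sum_range_succ']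
    have m2 : ∀ k ∈ Finset.range N,
        (if k + 1 + 1 ≠ 0 then F (RSd N (k + 1 + 1)) (RSd N (k + 1 + 1 - 1)) else 0)
          = F 2 2 := by
      intro k hk
      rw [Finset.mem_range] at hk
      rw [if_pos (by omega), dmid (k + 1 + 1) (by omega) (by omega),
        show k + 1 + 1 - 1 = k + 1 by omega, dmid (k + 1) (by omega) (by omega)]
    rw [Finset.sum_congr rfl m2, Finset.sum_const,
      if_pos (by omega : (N + 2 : ℕ) ≠ 0), if_pos (by omega : (0 + 1 : ℕ) ≠ 0),
      if_neg (by omega : ¬ ((0:ℕ) ≠ 0)),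
      show (N + 2 : ℕ) - 1 = N + 1 by omega, show (0 + 1 : ℕ) - 1 = 0 by omega,
      d0, dtop, dmid (N + 1) (by omega) (by omega), dmid (0 + 1) (by omega) (by omega),
      nsmul_eq_mul, Finset.card_range]
    ring
  rw [hS1, hS2]
  ring

end RSPath


section RSDart

variable {W : Type*} [Fintype W] [DecidableEq W] (G : SimpleGraph W) [DecidableRel G.Adj]

/-- darts as adjacent pairs -/
def RSdartE : G.Dart ≃ {p : W × W // G.Adj p.1 p.2} where
  toFun d := ⟨d.toProd, d.adj⟩
  invFun p := ⟨p.1, p.2⟩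
  left_inv d := rfl
  right_inv p := rfl

lemma RS_dart_sum (f : W → W → ℝ) (hs : ∀ u v, f u v = f v u) :
    2 * ∑ e ∈ G.edgeFinset, Sym2.lift ⟨f, hs⟩ e =
      ∑ u : W, ∑ v : W, if G.Adj u v then f u v else 0 := by
  have step1 : ∑ d : G.Dart, f d.toProd.1 d.toProd.2 =
      ∑ e ∈ G.edgeFinset, 2 * Sym2.lift ⟨f, hs⟩ e := by
    have hfib : ∑ e ∈ G.edgeFinset, ∑ d ∈ Finset.univ.filter (fun d : G.Dart => d.edge = e),
        f d.toProd.1 d.toProd.2 = ∑ d : G.Dart, f d.toProd.1 d.toProd.2 :=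
      Finset.sum_fiberwise_of_maps_to
        (fun d _ => by rw [SimpleGraph.mem_edgeFinset]; exact d.edge_mem) _
    rw [← hfib]
    refine Finset.sum_congr rfl fun e he => ?_
    have hval : ∀ d ∈ Finset.univ.filter (fun d : G.Dart => d.edge = e),
        f d.toProd.1 d.toProd.2 = Sym2.lift ⟨f, hs⟩ e := by
      intro d hd
      rw [Finset.mem_filter] at hd
      rw [← hd.2]
      rfl
    rw [Finset.sum_congr rfl hval, Finset.sum_const,
      G.dart_edge_fiber_card e (SimpleGraph.mem_edgeFinset.1 he), nsmul_eq_mul]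
    norm_num
  have step2 : ∑ d : G.Dart, f d.toProd.1 d.toProd.2 =
      ∑ u : W, ∑ v : W, if G.Adj u v then f u v else 0 := by
    rw [← Equiv.sum_comp (RSdartE G).symm (fun d => f d.toProd.1 d.toProd.2)]
    calc ∑ p : {p : W × W // G.Adj p.1 p.2},
          f (((RSdartE G).symm p).toProd.1) (((RSdartE G).symm p).toProd.2)
        = ∑ p ∈ Finset.univ.filter (fun p : W × W => G.Adj p.1 p.2), f p.1 p.2 :=
          (Finset.sum_subtype (Finset.univ.filter (fun p : W × W => G.Adj p.1 p.2))
            (fun p => by simp) (fun p => f p.1 p.2)).symm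
      _ = ∑ p : W × W, if G.Adj p.1 p.2 then f p.1 p.2 else 0 := by
          rw [← Finset.sum_filter]
      _ = ∑ u : W, ∑ v : W, if G.Adj u v then f u v else 0 := by
          rw [← Fintype.sum_prod_type']
  rw [← step2, step1, Finset.mul_sum]
lemma RS_two_mul_randic (α : ℝ) :
    2 * randic G α = ∑ u : W, ∑ v : W,
      if G.Adj u v then ((G.degree u : ℝ) * (G.degree v : ℝ)) ^ α else 0 := by
  classical
  rw [← RS_dart_sum G (fun u v => ((G.degree u : ℝ) * (G.degree v : ℝ)) ^ α)
    (fun u v => by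
      show ((G.degree u : ℝ) * (G.degree v : ℝ)) ^ α = ((G.degree v : ℝ) * (G.degree u : ℝ)) ^ α
      rw [mul_comm])]
  congr 1
  unfold randic
  congr! <;> exact Subsingleton.elim _ _

end RSDart

/-- the value of the inner sum over words, per adjacent degree pair. -/
noncomputable def RSF (n s : ℕ) (α : ℝ) (p q : ℕ) : ℝ :=
  ((n ^ (s + 1) : ℕ) : ℝ) * ((p : ℝ) * (q : ℝ)) ^ α
    + ((p * psi n (s + 1) : ℕ) : ℝ) * ((((p : ℝ) + 1) * (q : ℝ)) ^ α - ((p : ℝ) * (q : ℝ)) ^ α)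
    + ((q * psi n (s + 1) : ℕ) : ℝ) * (((p : ℝ) * ((q : ℝ) + 1)) ^ α - ((p : ℝ) * (q : ℝ)) ^ α)
    + ((p * psi n s + q * psi n s : ℕ) : ℝ) *
        ((((p : ℝ) + 1) * ((q : ℝ) + 1)) ^ α - (((p : ℝ) + 1) * (q : ℝ)) ^ α
          - ((p : ℝ) * ((q : ℝ) + 1)) ^ α + ((p : ℝ) * (q : ℝ)) ^ α)
    + ((psi n (s + 1) : ℕ) : ℝ) * (((p : ℝ) + 1) * ((q : ℝ) + 1)) ^ α

lemma RS_master {V : Type*} [Fintype V] [DecidableEq V] (G : SimpleGraph V)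
    [DecidableRel G.Adj]
    (htri : ∀ a b : V, G.Adj a b → ∀ z : V, ¬(G.Adj z a ∧ G.Adj z b)) (s : ℕ) (α : ℝ) :
    2 * randic (sierpinskiGraph G (s + 2)) α =
      ∑ a : V, ∑ c : V, if G.Adj a c then RSF (Fintype.card V) s α (G.degree a) (G.degree c)
        else 0 := by
  classical
  rw [RS_two_mul_randic]
  set SG := sierpinskiGraph G (s + 2) with hSG
  set f : (Fin (s + 2) → V) → (Fin (s + 2) → V) → ℝ :=
    fun x y => ((SG.degree x : ℝ) * (SG.degree y : ℝ)) ^ α with hf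
  set ep : (Fin (s + 1) → V) → V → ℝ :=
    fun w a => if RSCw G w a then (1 : ℝ) else 0 with hep
  set CT : (Fin (s + 1) → V) → V → ℝ := fun w a =>
    ∑ c : V, if G.Adj a c then
      (((G.degree a : ℝ) + ep w a) * ((G.degree c : ℝ) + ep w c)) ^ α else 0 with hCT
  set BT : (Fin (s + 1) → V) → V → ℝ := fun w a =>
    ∑ c : V, if G.Adj a c ∧ RSPc w a c then
      (((G.degree a : ℝ) + 1) * ((G.degree c : ℝ) + 1)) ^ α else 0 with hBT
  -- split adjacency into copy and bridge parts
  have stepA : ∀ x y : Fin (s + 2) → V, (if SG.Adj x y then f x y else 0) =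
      (if RSCAdj G x y then f x y else 0) + (if RSBAdj G x y then f x y else 0) := by
    intro x y
    have hiff : SG.Adj x y ↔ RSCAdj G x y ∨ RSBAdj G x y := RS_sadj_iff G x y
    by_cases h1 : RSCAdj G x y <;> by_cases h2 : RSBAdj G x y
    · exact absurd (RS_not_both G h1 h2) not_false
    · rw [if_pos (hiff.2 (Or.inl h1)), if_pos h1, if_neg h2, add_zero]
    · rw [if_pos (hiff.2 (Or.inr h2)), if_neg h1, if_pos h2, zero_add]
    · rw [if_neg (fun h => (hiff.1 h).elim h1 h2), if_neg h1, if_neg h2, add_zero]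
  -- the real-valued degree of a word
  have hdeg : ∀ x : Fin (s + 2) → V, (SG.degree x : ℝ) =
      (G.degree (x (last (s + 1))) : ℝ)
        + (if RSCw G (Fin.init x) (x (last (s + 1))) then (1 : ℝ) else 0) := by
    intro x
    have h0 : SG.degree x = G.degree (x (last (s + 1)))
        + (if RSCw G (Fin.init x) (x (last (s + 1))) then 1 else 0) := RS_degree G x
    rw [h0]
    by_cases h : RSCw G (Fin.init x) (x (last (s + 1)))
    · rw [if_pos h, if_pos h]; push_cast; ring
    · rw [if_neg h, if_neg h]; push_cast; ring
  -- bridge value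
  have hbridgeval : ∀ x y : Fin (s + 2) → V, RSBAdj G x y → f x y =
      (((G.degree (x (last (s + 1))) : ℝ) + 1) * ((G.degree (y (last (s + 1))) : ℝ) + 1)) ^ α := by
    intro x y hb
    obtain ⟨_, _, hcx, hcy⟩ := RS_badj_facts G hb
    rw [hf]
    dsimp only
    rw [hdeg x, hdeg y, if_pos hcx, if_pos hcy]
  have stepB : (∑ x : Fin (s + 2) → V, ∑ y, if SG.Adj x y then f x y else 0)
      = ∑ x : Fin (s + 2) → V,
          (CT (Fin.init x) (x (last (s + 1))) + BT (Fin.init x) (x (last (s + 1)))) := by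
    refine Finset.sum_congr rfl fun x _ => ?_
    rw [Finset.sum_congr rfl (fun y _ => stepA x y), Finset.sum_add_distrib,
      RS_copy_sum G x (f x),
      RS_bridge_sum G x (f x)
        (fun c => (((G.degree (x (last (s + 1))) : ℝ) + 1) * ((G.degree c : ℝ) + 1)) ^ α)
        (fun y hy => hbridgeval x y hy)]
    rw [hCT, hBT]
    dsimp only
    congr 1
    refine Finset.sum_congr rfl fun c _ => ?_
    by_cases h : G.Adj (x (last (s + 1))) c
    · rw [if_pos h, if_pos h]
      have e1 : (Fin.snoc (Fin.init x) c : Fin (s + 2) → V) (last (s + 1)) = c := by simp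
      have e2 : Fin.init (Fin.snoc (Fin.init x) c : Fin (s + 2) → V) = Fin.init x := by simp
      rw [hf]
      dsimp only
      rw [hdeg x, hdeg (Fin.snoc (Fin.init x) c), e1, e2, hep]
    · rw [if_neg h, if_neg h]
  rw [stepB, ← Equiv.sum_comp (RSsnocE (s + 1) V)
    (fun x => CT (Fin.init x) (x (last (s + 1))) + BT (Fin.init x) (x (last (s + 1)))),
    Fintype.sum_prod_type]
  have hsnoc : ∀ (w : Fin (s + 1) → V) (a : V),
      (RSsnocE (s + 1) V) (w, a) = Fin.snoc w a := fun _ _ => rfl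
  simp only [hsnoc, Fin.init_snoc, Fin.snoc_last]
  -- now evaluate the word sums
  rw [Finset.sum_comm]
  refine Finset.sum_congr rfl fun a _ => ?_
  rw [Finset.sum_add_distrib, hCT, hBT]
  dsimp only
  have hsw1 : (∑ w : Fin (s + 1) → V, ∑ c : V, if G.Adj a c then
      (((G.degree a : ℝ) + ep w a) * ((G.degree c : ℝ) + ep w c)) ^ α else 0)
      = ∑ c : V, ∑ w : Fin (s + 1) → V, if G.Adj a c then
        (((G.degree a : ℝ) + ep w a) * ((G.degree c : ℝ) + ep w c)) ^ α else 0 :=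
    Finset.sum_comm
  have hsw2 : (∑ w : Fin (s + 1) → V, ∑ c : V, if G.Adj a c ∧ RSPc w a c then
      (((G.degree a : ℝ) + 1) * ((G.degree c : ℝ) + 1)) ^ α else 0)
      = ∑ c : V, ∑ w : Fin (s + 1) → V, if G.Adj a c ∧ RSPc w a c then
        (((G.degree a : ℝ) + 1) * ((G.degree c : ℝ) + 1)) ^ α else 0 :=
    Finset.sum_comm
  rw [hsw1, hsw2, ← Finset.sum_add_distrib]
  refine Finset.sum_congr rfl fun c _ => ?_
  by_cases h : G.Adj a c
  · rw [if_pos h]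
    have hca : c ≠ a := h.ne'
    have hW2 : (∑ w : Fin (s + 1) → V, if G.Adj a c ∧ RSPc w a c then
        (((G.degree a : ℝ) + 1) * ((G.degree c : ℝ) + 1)) ^ α else 0)
          = ((psi (Fintype.card V) (s + 1) : ℕ) : ℝ) *
            (((G.degree a : ℝ) + 1) * ((G.degree c : ℝ) + 1)) ^ α := by
      have hpt : ∀ w : Fin (s + 1) → V, (if G.Adj a c ∧ RSPc w a c then
          (((G.degree a : ℝ) + 1) * ((G.degree c : ℝ) + 1)) ^ α else 0)
            = (if RSPc w a c then (1 : ℝ) else 0) *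
              (((G.degree a : ℝ) + 1) * ((G.degree c : ℝ) + 1)) ^ α := by
        intro w
        by_cases hw : RSPc w a c
        · rw [if_pos ⟨h, hw⟩, if_pos hw, one_mul]
        · rw [if_neg (fun hh => hw hh.2), if_neg hw, zero_mul]
      rw [Finset.sum_congr rfl (fun w _ => hpt w), ← Finset.sum_mul, Finset.sum_boole,
        RS_spc_count a c hca (s + 1)]
    have hsum1 : (∑ w : Fin (s + 1) → V, ep w a)
        = ((G.degree a * psi (Fintype.card V) (s + 1) : ℕ) : ℝ) := by
      rw [hep]; dsimp only
      rw [Finset.sum_boole, RS_scw_count G a (s + 1)]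
    have hsum2 : (∑ w : Fin (s + 1) → V, ep w c)
        = ((G.degree c * psi (Fintype.card V) (s + 1) : ℕ) : ℝ) := by
      rw [hep]; dsimp only
      rw [Finset.sum_boole, RS_scw_count G c (s + 1)]
    have hsum3 : (∑ w : Fin (s + 1) → V, ep w a * ep w c)
        = ((G.degree a * psi (Fintype.card V) s + G.degree c * psi (Fintype.card V) s : ℕ) : ℝ) := by
      have hpt : ∀ w : Fin (s + 1) → V, ep w a * ep w c
          = if RSCw G w a ∧ RSCw G w c then (1 : ℝ) else 0 := by
        intro w
        rw [hep]; dsimp only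
        by_cases h1 : RSCw G w a <;> by_cases h2 : RSCw G w c
        · rw [if_pos h1, if_pos h2, if_pos ⟨h1, h2⟩, one_mul]
        · rw [if_pos h1, if_neg h2, if_neg (fun hh => h2 hh.2), one_mul]
        · rw [if_neg h1, if_pos h2, if_neg (fun hh => h1 hh.1), zero_mul]
        · rw [if_neg h1, if_neg h2, if_neg (fun hh => h1 hh.1), zero_mul]
      rw [Finset.sum_congr rfl (fun w _ => hpt w), Finset.sum_boole,
        RS_joint_count G h (htri a c h) s]
    set dA : ℝ := (G.degree a : ℝ)
    set dC : ℝ := (G.degree c : ℝ)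
    have hW1 : (∑ w : Fin (s + 1) → V, if G.Adj a c then
        ((dA + ep w a) * (dC + ep w c)) ^ α else 0)
          = (((Fintype.card V) ^ (s + 1) : ℕ) : ℝ) * (dA * dC) ^ α
            + (∑ w : Fin (s + 1) → V, ep w a) * (((dA + 1) * dC) ^ α - (dA * dC) ^ α)
            + (∑ w : Fin (s + 1) → V, ep w c) * ((dA * (dC + 1)) ^ α - (dA * dC) ^ α)
            + (∑ w : Fin (s + 1) → V, ep w a * ep w c) *
                (((dA + 1) * (dC + 1)) ^ α - ((dA + 1) * dC) ^ α - (dA * (dC + 1)) ^ α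
                  + (dA * dC) ^ α) := by
      have hpt : ∀ w : Fin (s + 1) → V, (if G.Adj a c then
          ((dA + ep w a) * (dC + ep w c)) ^ α else 0)
            = (dA * dC) ^ α
              + ep w a * (((dA + 1) * dC) ^ α - (dA * dC) ^ α)
              + ep w c * ((dA * (dC + 1)) ^ α - (dA * dC) ^ α)
              + ep w a * ep w c *
                (((dA + 1) * (dC + 1)) ^ α - ((dA + 1) * dC) ^ α - (dA * (dC + 1)) ^ α
                  + (dA * dC) ^ α) := by
        intro w
        rw [if_pos h, hep]
        dsimp only
        by_cases h1 : RSCw G w a <;> by_cases h2 : RSCw G w c <;>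
          simp only [h1, h2, if_true, if_false, add_zero, iff_true, iff_false, ite_true,
            ite_false] <;> ring
      rw [Finset.sum_congr rfl (fun w _ => hpt w)]
      simp only [Finset.sum_add_distrib]
      rw [← Finset.sum_mul, ← Finset.sum_mul, ← Finset.sum_mul, Finset.sum_const,
        Finset.card_univ, Fintype.card_fun, Fintype.card_fin, nsmul_eq_mul]
    rw [hW1, hW2, hsum1, hsum2, hsum3]
    unfold RSF
    push_cast
    ring
  · have hz1 : (∑ w : Fin (s + 1) → V, if G.Adj a c then
        ((( G.degree a : ℝ) + ep w a) * ((G.degree c : ℝ) + ep w c)) ^ α else 0) = 0 :=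
      Finset.sum_eq_zero fun w _ => if_neg h
    have hz2 : (∑ w : Fin (s + 1) → V, if G.Adj a c ∧ RSPc w a c then
        (((G.degree a : ℝ) + 1) * ((G.degree c : ℝ) + 1)) ^ α else 0) = 0 :=
      Finset.sum_eq_zero fun w _ => if_neg (fun hh => h hh.1)
    rw [hz1, hz2, if_neg h, add_zero]

lemma RS_rpow_facts (α : ℝ) :
    ((4:ℝ))^α = 2^α * 2^α ∧ ((6:ℝ))^α = 2^α * 3^α ∧ ((9:ℝ))^α = 3^α * 3^α ∧
    (2:ℝ)^(α+2) = 2^α * 4 ∧ (2:ℝ)^(α+1) = 2^α * 2 ∧ (2:ℝ)^(2*α+1) = 2^α * 2^α * 2 := by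
  have h22 : (2:ℝ)^(2:ℝ) = 4 := by
    rw [show ((2:ℝ):ℝ) = ((2:ℕ):ℝ) by norm_num, Real.rpow_natCast]
    norm_num
  refine ⟨?_, ?_, ?_, ?_, ?_, ?_⟩
  · rw [show (4:ℝ) = 2*2 by norm_num, Real.mul_rpow (by norm_num) (by norm_num)]
  · rw [show (6:ℝ) = 2*3 by norm_num, Real.mul_rpow (by norm_num) (by norm_num)]
  · rw [show (9:ℝ) = 3*3 by norm_num, Real.mul_rpow (by norm_num) (by norm_num)]
  · rw [Real.rpow_add (by norm_num : (0:ℝ) < 2), h22]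
  · rw [Real.rpow_add (by norm_num : (0:ℝ) < 2), Real.rpow_one]
  · rw [Real.rpow_add (by norm_num : (0:ℝ) < 2), Real.rpow_one, two_mul,
      Real.rpow_add (by norm_num : (0:ℝ) < 2)]


theorem randic_sierpinski_path {n t : ℕ} (hn : 3 ≤ n) (ht : 2 ≤ t) (α : ℝ) :
    randic (sierpinskiGraph (SimpleGraph.pathGraph n) t) α =
      (2 : ℝ) ^ α * (n : ℝ) ^ (t - 2) * ((n : ℝ) - 3) *
          ((2 : ℝ) ^ α * (n : ℝ) - (2 : ℝ) ^ (α + 2) + 2) +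
        (3 : ℝ) ^ α * ((2 : ℝ) ^ (α + 2) * ((n : ℝ) - 3) *
              ((n : ℝ) ^ (t - 2) - (psi n (t - 2) : ℝ)) +
            4 * (n : ℝ) ^ (t - 2) - 2 * (psi n (t - 2) : ℝ)) +
        (2 : ℝ) ^ (2 * α + 1) * ((n : ℝ) ^ (t - 2) - 2 * (psi n (t - 2) : ℝ)) +
        (3 : ℝ) ^ α * ((3 : ℝ) ^ α * ((n : ℝ) - 3) *
              ((n : ℝ) ^ (t - 2) + 5 * (psi n (t - 2) : ℝ)) +
            (2 : ℝ) ^ (α + 1) * ((n : ℝ) ^ (t - 2) + 4 * (psi n (t - 2) : ℝ))) := by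
  classical
  obtain ⟨N, rfl⟩ : ∃ N, n = N + 3 := ⟨n - 3, by omega⟩
  obtain ⟨s, rfl⟩ : ∃ s, t = s + 2 := ⟨t - 2, by omega⟩
  have key := RS_master (SimpleGraph.pathGraph (N + 3))
    (fun a b hab => RS_path_no_common hab) s α
  simp only [Fintype.card_fin] at key
  rw [RS_path_sum_adj N (RSF (N + 3) s α)] at key
  simp only [Nat.add_sub_cancel]
  obtain ⟨e4, e6, e9, eA2, eA1, eA3⟩ := RS_rpow_facts α
  have hpsi : ((psi (N + 3) (s + 1) : ℕ) : ℝ) = ((psi (N + 3) s : ℕ) : ℝ) + ((N : ℝ) + 3) ^ s := by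
    have h0 : psi (N + 3) (s + 1) = psi (N + 3) s + (N + 3) ^ s := by
      unfold psi; rw [Finset.sum_range_succ]
    rw [h0]; push_cast; ring
  have hvals : 2 * RSF (N + 3) s α 1 2 + 2 * RSF (N + 3) s α 2 1 + 2 * (N : ℝ) * RSF (N + 3) s α 2 2
      = 2 * ((2 : ℝ) ^ α * ((N : ℝ) + 3) ^ s * (((N : ℝ) + 3) - 3) *
          ((2 : ℝ) ^ α * ((N : ℝ) + 3) - (2 : ℝ) ^ (α + 2) + 2) +
        (3 : ℝ) ^ α * ((2 : ℝ) ^ (α + 2) * (((N : ℝ) + 3) - 3) *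
              (((N : ℝ) + 3) ^ s - (psi (N + 3) s : ℝ)) +
            4 * ((N : ℝ) + 3) ^ s - 2 * (psi (N + 3) s : ℝ)) +
        (2 : ℝ) ^ (2 * α + 1) * (((N : ℝ) + 3) ^ s - 2 * (psi (N + 3) s : ℝ)) +
        (3 : ℝ) ^ α * ((3 : ℝ) ^ α * (((N : ℝ) + 3) - 3) *
              (((N : ℝ) + 3) ^ s + 5 * (psi (N + 3) s : ℝ)) +
            (2 : ℝ) ^ (α + 1) * (((N : ℝ) + 3) ^ s + 4 * (psi (N + 3) s : ℝ)))) := by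
    unfold RSF
    push_cast
    norm_num
    simp only [hpsi, e4, e6, e9, eA2, eA1, eA3, pow_succ]
    ring
  rw [hvals] at key
  push_cast
  linarith [key]
end

section
/- Let G = (U_1 ∪ U_2, E) be a connected bipartite (δ_1,δ_2)-semiregular graph of order n = n_1 + n_2, where |U_1| = n_1 and |U_2| = n_2, and let α be a real number. Then R_α(P(G,1)) = n^α·(n_1(δ_1+1)^α + n_2(δ_2+1)^α) + n_1δ_1·((δ_1+1)(δ_2+1))^α. -/
open Finset

/-- `P(G,1)`: the graph obtained from `G` by adding one new vertex adjacent to every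
vertex of `G`. -/
def cone {V : Type*} (G : SimpleGraph V) : SimpleGraph (Option V) :=
  SimpleGraph.fromRel fun u v => u = none ∨ ∃ a b, u = some a ∧ v = some b ∧ G.Adj a b


lemma cone_adj_none_some {V : Type*} (G : SimpleGraph V) (a : V) :
    (cone G).Adj none (some a) := by
  simp [cone, SimpleGraph.fromRel_adj]

lemma cone_adj_some_some {V : Type*} (G : SimpleGraph V) (a b : V) :
    (cone G).Adj (some a) (some b) ↔ G.Adj a b := by
  constructor
  · rintro ⟨hne, h | h⟩ <;> simp_all
    · exact h.symm
  · intro h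
    exact ⟨by simpa using h.ne, Or.inl (Or.inr ⟨a, b, rfl, rfl, h⟩)⟩

lemma cone_not_adj_none_none {V : Type*} (G : SimpleGraph V) :
    ¬ (cone G).Adj none none := (cone G).loopless.irrefl none

open Classical in
lemma cone_nbhd_some {V : Type*} [Fintype V] [DecidableEq V] (G : SimpleGraph V)
    [DecidableRel G.Adj] (a : V) :
    (cone G).neighborFinset (some a) = insert none ((G.neighborFinset a).image some) := by
  ext x
  cases x with
  | none => simp [SimpleGraph.mem_neighborFinset, ((cone_adj_none_some G a).symm)]
  | some b => simp [SimpleGraph.mem_neighborFinset, cone_adj_some_some]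

open Classical in
lemma cone_deg_some {V : Type*} [Fintype V] [DecidableEq V] (G : SimpleGraph V)
    [DecidableRel G.Adj] (a : V) :
    (cone G).degree (some a) = G.degree a + 1 := by
  classical
  rw [← SimpleGraph.card_neighborFinset_eq_degree, cone_nbhd_some,
    Finset.card_insert_of_notMem (by simp), Finset.card_image_of_injective _ (Option.some_injective V)]
  simp [SimpleGraph.card_neighborFinset_eq_degree]

open Classical in
lemma cone_deg_none {V : Type*} [Fintype V] [DecidableEq V] (G : SimpleGraph V)
    [DecidableRel G.Adj] :
    (cone G).degree none = Fintype.card V := by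
  classical
  rw [← SimpleGraph.card_neighborFinset_eq_degree]
  have : (cone G).neighborFinset none = Finset.univ.image some := by
    ext x
    cases x with
    | none => simp [SimpleGraph.mem_neighborFinset]
    | some b => simp [SimpleGraph.mem_neighborFinset, cone_adj_none_some]
  rw [this, Finset.card_image_of_injective _ (Option.some_injective V)]
  simp

open Classical in
lemma cone_edgeFinset {V : Type*} [Fintype V] [DecidableEq V] (G : SimpleGraph V)
    [DecidableRel G.Adj] :
    (cone G).edgeFinset =
      (Finset.univ.image fun v : V => s(none, some v)) ∪
        G.edgeFinset.image (Sym2.map some) := by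
  ext e
  refine Sym2.ind (fun x y => ?_) e
  simp only [SimpleGraph.mem_edgeFinset, SimpleGraph.mem_edgeSet, Finset.mem_union,
    Finset.mem_image, Finset.mem_univ, true_and, Sym2.exists, Sym2.map_pair_eq, Sym2.eq_iff]
  cases x with
  | none =>
    cases y with
    | none => simp [(cone G).loopless.irrefl none]
    | some b => simp [cone_adj_none_some]
  | some a =>
    cases y with
    | none => simp [((cone G).adj_symm (cone_adj_none_some G a)), eq_comm]
    | some b =>
      simp only [cone_adj_some_some]
      constructor
      · intro h; exact Or.inr ⟨a, b, h, Or.inl ⟨rfl, rfl⟩⟩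
      · rintro (⟨v, ⟨h1, h2⟩ | ⟨h1, h2⟩⟩ | ⟨p, q, hpq, ⟨h1, h2⟩ | ⟨h1, h2⟩⟩) <;> simp_all
        · exact hpq.symm

lemma edge_count {V : Type*} [Fintype V] [DecidableEq V] (G : SimpleGraph V)
    [DecidableRel G.Adj] (U1 U2 : Finset V) (hdisj : Disjoint U1 U2)
    (hbip : ∀ x y, G.Adj x y → (x ∈ U1 ∧ y ∈ U2) ∨ (x ∈ U2 ∧ y ∈ U1)) :
    G.edgeFinset.card = ∑ v ∈ U1, G.degree v := by
  have hU : ∀ x y, G.Adj x y → x ∈ U1 → y ∉ U1 := by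
    intro x y hxy hx hy
    rcases hbip x y hxy with ⟨_, h2⟩ | ⟨h1, _⟩
    · exact (Finset.disjoint_left.mp hdisj hy) h2
    · exact (Finset.disjoint_left.mp hdisj hx) h1
  have hset : G.edgeFinset = U1.biUnion (fun v => G.incidenceFinset v) := by
    ext e
    refine Sym2.ind (fun x y => ?_) e
    simp only [Finset.mem_biUnion, SimpleGraph.mem_incidenceFinset, SimpleGraph.mk'_mem_incidenceSet_iff]
    constructor
    · intro h
      have hxy : G.Adj x y := by simpa using h
      rcases hbip x y hxy with ⟨h1, _⟩ | ⟨_, h1⟩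
      · exact ⟨x, h1, hxy, Or.inl rfl⟩
      · exact ⟨y, h1, hxy, Or.inr rfl⟩
    · rintro ⟨v, _, h, _⟩
      simpa using h
  rw [hset, Finset.card_biUnion]
  · exact Finset.sum_congr rfl fun v _ => (G.card_incidenceFinset_eq_degree v)
  · intro v hv w hw hvw
    simp only [Finset.disjoint_left]
    intro e he he'
    rw [SimpleGraph.mem_incidenceFinset] at he he'
    obtain ⟨hadj, hve⟩ := he
    obtain ⟨_, hwe⟩ := he'
    revert hadj hve hwe
    induction e using Sym2.ind with
    | _ x y =>
    intro hadj hve hwe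
    rw [SimpleGraph.mem_edgeSet] at hadj
    rw [Sym2.mem_iff] at hve hwe
    rcases hve with rfl | rfl <;> rcases hwe with rfl | rfl
    · exact hvw rfl
    · exact hU v w hadj hv hw
    · exact hU v w hadj.symm hv hw
    · exact hvw rfl

theorem randic_cone_semiregular {V : Type*} [Fintype V] [DecidableEq V] (G : SimpleGraph V)
    [DecidableRel G.Adj] (hconn : G.Connected) (U1 U2 : Finset V)
    (hdisj : Disjoint U1 U2) (hcover : U1 ∪ U2 = Finset.univ)
    (hbip : ∀ x y, G.Adj x y → (x ∈ U1 ∧ y ∈ U2) ∨ (x ∈ U2 ∧ y ∈ U1))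
    (δ1 δ2 n1 n2 n : ℕ)
    (hd1 : ∀ x ∈ U1, G.degree x = δ1) (hd2 : ∀ x ∈ U2, G.degree x = δ2)
    (hn1 : U1.card = n1) (hn2 : U2.card = n2) (hn : n = n1 + n2)
    (hcard : Fintype.card V = n) (α : ℝ) :
    randic (cone G) α =
      (n : ℝ) ^ α * ((n1 : ℝ) * ((δ1 : ℝ) + 1) ^ α + (n2 : ℝ) * ((δ2 : ℝ) + 1) ^ α) +
        (n1 : ℝ) * (δ1 : ℝ) * (((δ1 : ℝ) + 1) * ((δ2 : ℝ) + 1)) ^ α := by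
  classical
  have hnn : (0:ℝ) ≤ (n:ℝ) := Nat.cast_nonneg n
  have hd1n : (0:ℝ) ≤ (δ1:ℝ) + 1 := by positivity
  have hd2n : (0:ℝ) ≤ (δ2:ℝ) + 1 := by positivity
  set f : Sym2 (Option V) → ℝ := Sym2.lift ⟨fun u v =>
      (((cone G).degree u : ℝ) * ((cone G).degree v : ℝ)) ^ α,
      fun u v => by dsimp only; rw [mul_comm]⟩ with hf
  have hrandic : randic (cone G) α = ∑ e ∈ (cone G).edgeFinset, f e := by
    rw [randic]
  have hval : ∀ x y : Option V, f s(x, y) =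
      (((cone G).degree x : ℝ) * ((cone G).degree y : ℝ)) ^ α := fun x y => rfl
  have hE : (cone G).edgeFinset =
      (Finset.univ.image fun v : V => s(none, some v)) ∪
        G.edgeFinset.image (Sym2.map some) := by
    rw [cone_edgeFinset]
  have hdisjE : Disjoint (Finset.univ.image fun v : V => s(none, some v))
      (G.edgeFinset.image (Sym2.map some)) := by
    rw [Finset.disjoint_left]
    rintro e he he'
    obtain ⟨v, -, rfl⟩ := Finset.mem_image.mp he
    obtain ⟨e', -, he''⟩ := Finset.mem_image.mp he'
    revert he''
    induction e' using Sym2.ind with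
    | _ a b =>
      rw [Sym2.map_pair_eq, Sym2.eq_iff]
      rintro (⟨h, -⟩ | ⟨-, h⟩) <;> exact Option.some_ne_none _ h
  have hinj0 : ∀ a ∈ (Finset.univ : Finset V), ∀ b ∈ (Finset.univ : Finset V),
      s((none : Option V), some a) = s((none : Option V), some b) → a = b := by
    intro a _ b _ h
    simp only [Sym2.eq_iff] at h
    rcases h with ⟨-, h⟩ | ⟨h, -⟩ <;> simp_all
  have hsum0 : ∑ e ∈ Finset.univ.image (fun v : V => s(none, some v)), f e =
      ∑ v : V, ((n : ℝ) * ((G.degree v : ℝ) + 1)) ^ α := by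
    rw [Finset.sum_image hinj0]
    refine Finset.sum_congr rfl fun v _ => ?_
    rw [hval, cone_deg_none, cone_deg_some, hcard]
    push_cast
    ring_nf
  have hsum1 : ∑ e ∈ G.edgeFinset.image (Sym2.map some), f e =
      (G.edgeFinset.card : ℝ) * (((δ1 : ℝ) + 1) * ((δ2 : ℝ) + 1)) ^ α := by
    rw [Finset.sum_image (fun a _ b _ h => Sym2.map.injective (Option.some_injective V) h)]
    rw [Finset.sum_congr rfl (g := fun _ => (((δ1 : ℝ) + 1) * ((δ2 : ℝ) + 1)) ^ α)
      (fun e he => ?_), Finset.sum_const, nsmul_eq_mul]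
    revert he
    induction e using Sym2.ind with
    | _ a b =>
      intro he
      have hadj : G.Adj a b := by
        rw [SimpleGraph.mem_edgeFinset, SimpleGraph.mem_edgeSet] at he; exact he
      rw [Sym2.map_pair_eq, hval, cone_deg_some, cone_deg_some]
      rcases hbip a b hadj with ⟨h1, h2⟩ | ⟨h1, h2⟩
      · rw [hd1 a h1, hd2 b h2]; push_cast; ring_nf
      · rw [hd2 a h1, hd1 b h2]; push_cast; ring_nf
  have hcnt : (G.edgeFinset.card : ℝ) = (n1 : ℝ) * (δ1 : ℝ) := by
    rw [edge_count G U1 U2 hdisj hbip]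
    rw [Finset.sum_congr rfl (g := fun _ => δ1) hd1, Finset.sum_const, hn1, smul_eq_mul]
    push_cast; ring
  have hsplit : ∑ v : V, ((n : ℝ) * ((G.degree v : ℝ) + 1)) ^ α =
      (n : ℝ) ^ α * ((n1 : ℝ) * ((δ1 : ℝ) + 1) ^ α + (n2 : ℝ) * ((δ2 : ℝ) + 1) ^ α) := by
    rw [show (Finset.univ : Finset V) = U1 ∪ U2 from hcover.symm,
      Finset.sum_union hdisj]
    have h1 : ∑ v ∈ U1, ((n : ℝ) * ((G.degree v : ℝ) + 1)) ^ α =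
        (n1 : ℝ) * ((n : ℝ) ^ α * ((δ1 : ℝ) + 1) ^ α) := by
      rw [Finset.sum_congr rfl (g := fun _ => (n : ℝ) ^ α * ((δ1 : ℝ) + 1) ^ α)
        (fun v hv => by rw [hd1 v hv, Real.mul_rpow hnn hd1n]), Finset.sum_const, hn1,
        nsmul_eq_mul]
    have h2 : ∑ v ∈ U2, ((n : ℝ) * ((G.degree v : ℝ) + 1)) ^ α =
        (n2 : ℝ) * ((n : ℝ) ^ α * ((δ2 : ℝ) + 1) ^ α) := by
      rw [Finset.sum_congr rfl (g := fun _ => (n : ℝ) ^ α * ((δ2 : ℝ) + 1) ^ α)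
        (fun v hv => by rw [hd2 v hv, Real.mul_rpow hnn hd2n]), Finset.sum_const, hn2,
        nsmul_eq_mul]
    rw [h1, h2]; ring
  rw [hrandic, hE, Finset.sum_union hdisjE, hsum0, hsum1, hcnt, hsplit]
end
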